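/- arXiv:2301.01374 — 2 statements merged into one kernel-verified Lean document; each statement's English description precedes it below -/
import Mathlib

section
/- Let I ⊆ {1,…,n} with |I| = r be such that {v_i : i ∈ I} is a basis of ℝ^r, let k ∈ I, let j ∉ I, and set J = I ∪ {j}. Let (a_i)_{i∈J} be any nonzero tuple of real numbers with ∑_{i∈J} a_i v_i = 0, and let μ : ℝ^r → ℝ be the unique linear function with μ(v_k) = Vol_I and μ(v_i) = 0 for all i ∈ I ∖ {k}. Then μ(v_j) = − sign(a_k) · sign(a_j) · Vol_{J∖{k}}, where sign : ℝ → {−1,0,1} is the usual sign function. -/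
open scoped BigOperators Classical

noncomputable section

namespace BBGKZ

/-- The real vector corresponding to the `i`-th integer vector `v i`. -/
def vR {r n : ℕ} (v : Fin n → Fin r → ℤ) (i : Fin n) : Fin r → ℝ := fun j => (v i j : ℝ)

/-- The complex vector corresponding to the `i`-th integer vector `v i`. -/
def vC {r n : ℕ} (v : Fin n → Fin r → ℤ) (i : Fin n) : Fin r → ℂ := fun j => (v i j : ℂ)

/-- The real vector corresponding to an integer vector. -/
def intVec {r : ℕ} (c : Fin r → ℤ) : Fin r → ℝ := fun j => (c j : ℝ)

/-- The complex vector corresponding to an integer vector. -/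
def intVecC {r : ℕ} (c : Fin r → ℤ) : Fin r → ℂ := fun j => (c j : ℂ)

/-- The cone `C = ∑ ℝ_{≥0} v_i`. -/
def coneC {r n : ℕ} (v : Fin n → Fin r → ℤ) : Set (Fin r → ℝ) :=
  {x | ∃ t : Fin n → ℝ, (∀ i, 0 ≤ t i) ∧ x = ∑ i, t i • vR v i}

/-- The cone `σ_I = ∑_{i ∈ I} ℝ_{≥0} v_i`. -/
def sigmaCone {r n : ℕ} (v : Fin n → Fin r → ℤ) (I : Finset (Fin n)) : Set (Fin r → ℝ) :=
  {x | ∃ t : Fin n → ℝ, (∀ i, 0 ≤ t i) ∧ (∀ i, i ∉ I → t i = 0) ∧ x = ∑ i, t i • vR v i}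

/-- `v_I = ∑_{i ∈ I} v_i`. -/
def vSum {r n : ℕ} (v : Fin n → Fin r → ℤ) (I : Finset (Fin n)) : Fin r → ℤ := ∑ i ∈ I, v i

/-- `Vol_I`: the absolute value of the determinant of the `r × r` matrix whose rows are the
vectors `v i`, `i ∈ I` (defined when `I.card = r`, and `0` otherwise). -/
def Vol {r n : ℕ} (v : Fin n → Fin r → ℤ) (I : Finset (Fin n)) : ℝ :=
  if h : I.card = r then
    |(Matrix.of fun a b : Fin r => vR v (I.orderIsoOfFin h a).1 b).det| else 0

/-- A vector of `ℝ^r` is generic if it lies in no proper linear subspace spanned by integer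
vectors. -/
def GenericVec {r : ℕ} (w : Fin r → ℝ) : Prop :=
  ∀ T : Set (Fin r → ℤ), Submodule.span ℝ (intVec '' T) ≠ ⊤ → w ∉ Submodule.span ℝ (intVec '' T)

/-- The value at `β ∈ ℂ^r` of the `ℂ`-linear extension of `μ : ℝ^r → ℝ`. -/
def muC {r : ℕ} (μ : (Fin r → ℝ) →ₗ[ℝ] ℝ) (β : Fin r → ℂ) : ℂ :=
  ∑ j, β j * (μ (Pi.single j 1) : ℂ)

/-- A solution of `bbGKZ(S, 0)` on `U`, where `S` is `C` or `C°`. -/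
def IsSol0 {r n : ℕ} (v : Fin n → Fin r → ℤ) (S : Set (Fin r → ℝ))
    (U : Set (Fin n → ℂ)) (Φ : (Fin r → ℤ) → (Fin n → ℂ) → ℂ) : Prop :=
  (∀ c : Fin r → ℤ, intVec c ∈ S → DifferentiableOn ℂ (Φ c) U) ∧
  (∀ c : Fin r → ℤ, intVec c ∈ S → ∀ i : Fin n, ∀ x ∈ U,
      fderiv ℂ (Φ c) x (Pi.single i 1) = Φ (c + v i) x) ∧
  (∀ c : Fin r → ℤ, intVec c ∈ S → ∀ μ : (Fin r → ℝ) →ₗ[ℝ] ℝ, ∀ x ∈ U,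
      (∑ i, (μ (vR v i) : ℂ) * x i * fderiv ℂ (Φ c) x (Pi.single i 1))
        + (μ (intVec c) : ℂ) * Φ c x = 0)

/-- A solution of `bbGKZ(S, β)` on `U`. -/
def IsSolBeta {r n : ℕ} (v : Fin n → Fin r → ℤ) (S : Set (Fin r → ℝ)) (β : Fin r → ℂ)
    (U : Set (Fin n → ℂ)) (Φ : (Fin r → ℤ) → (Fin n → ℂ) → ℂ) : Prop :=
  (∀ c : Fin r → ℤ, intVec c ∈ S → DifferentiableOn ℂ (Φ c) U) ∧
  (∀ c : Fin r → ℤ, intVec c ∈ S → ∀ i : Fin n, ∀ x ∈ U,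
      fderiv ℂ (Φ c) x (Pi.single i 1) = Φ (c + v i) x) ∧
  (∀ c : Fin r → ℤ, intVec c ∈ S → ∀ μ : (Fin r → ℝ) →ₗ[ℝ] ℝ, ∀ x ∈ U,
      (∑ i, (μ (vR v i) : ℂ) * x i * fderiv ℂ (Φ c) x (Pi.single i 1))
        + ((μ (intVec c) : ℂ) - muC μ β) * Φ c x = 0)

/-- The coefficients `ξ_{c,d,I}` determined by a generic vector `v0 ∈ C°`:
`ξ_{c,d,I} = (-1)^{deg c}` if `σ_I` is `r`-dimensional and for all sufficiently small `ε > 0`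
both `c + ε v0` and `d - ε v0` lie in the interior of `σ_I`, and `0` otherwise. -/
def xiCoef {r n : ℕ} (v : Fin n → Fin r → ℤ) (degZ : (Fin r → ℤ) → ℤ) (v0 : Fin r → ℝ)
    (c d : Fin r → ℤ) (I : Finset (Fin n)) : ℂ :=
  if intVec c ∈ coneC v ∧ intVec d ∈ interior (coneC v) ∧ c + d = vSum v I ∧ I.card = r ∧
      Submodule.span ℝ (vR v '' (I : Set (Fin n))) = ⊤ ∧
      (∀ᶠ ε in nhdsWithin (0 : ℝ) (Set.Ioi 0),
        intVec c + ε • v0 ∈ interior (sigmaCone v I) ∧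
        intVec d - ε • v0 ∈ interior (sigmaCone v I))
  then (-1 : ℂ) ^ (degZ c) else 0

/-- The pairing `⟨Φ, Ψ⟩ = ∑_{c,d,I} ξ_{c,d,I} Vol_I (∏_{i∈I} x_i) Φ_c Ψ_d`, where the
(finitely supported) inner sum is over lattice points `c ∈ C`, `d ∈ C°` with `c + d = v_I`. -/
def pairingXi {r n : ℕ} (v : Fin n → Fin r → ℤ)
    (ξ : (Fin r → ℤ) → (Fin r → ℤ) → Finset (Fin n) → ℂ)
    (Φ Ψ : (Fin r → ℤ) → (Fin n → ℂ) → ℂ) (x : Fin n → ℂ) : ℂ :=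
  ∑ I ∈ Finset.powersetCard r (Finset.univ : Finset (Fin n)),
    ∑ᶠ c : Fin r → ℤ,
      (if intVec c ∈ coneC v ∧ intVec (vSum v I - c) ∈ interior (coneC v) then
        ξ c (vSum v I - c) I * (Vol v I : ℂ) * (∏ i ∈ I, x i) * Φ c x * Ψ (vSum v I - c) x
      else 0)

/-- A finite simplicial fan supported on `C` with rays among the `v_i`, encoded by the finite
family of index sets of its cones. -/
structure IsFan {r n : ℕ} (v : Fin n → Fin r → ℤ) (Fam : Finset (Finset (Fin n))) : Prop where
  indep : ∀ I ∈ Fam, LinearIndependent ℝ (fun i : {x : Fin n // x ∈ I} => vR v i.1)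
  downward : ∀ I ∈ Fam, ∀ J : Finset (Fin n), J ⊆ I → J ∈ Fam
  inter : ∀ I ∈ Fam, ∀ J ∈ Fam, ∃ K ∈ Fam, K ⊆ I ∧ K ⊆ J ∧
    sigmaCone v I ∩ sigmaCone v J = sigmaCone v K
  max_cones : ∀ I ∈ Fam, ∃ J ∈ Fam, I ⊆ J ∧ J.card = r
  union_eq : (⋃ I ∈ (Fam : Set (Finset (Fin n))), sigmaCone v I) = coneC v

/-- `ψ` is strictly `Σ`-convex. -/
def StrictSigmaConvex {r n : ℕ} (v : Fin n → Fin r → ℤ) (Fam : Finset (Finset (Fin n)))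
    (ψ : (Fin r → ℝ) → ℝ) : Prop :=
  ∀ I ∈ Fam, I.card = r → ∃ ℓ : (Fin r → ℝ) →ₗ[ℝ] ℝ,
    (∀ x ∈ sigmaCone v I, ψ x = ℓ x) ∧ (∀ x ∈ coneC v, x ∉ sigmaCone v I → ℓ x < ψ x)

/-- The minimal cone of the fan containing a given point. -/
def IsMinConeOf {r n : ℕ} (v : Fin n → Fin r → ℤ) (Fam : Finset (Finset (Fin n)))
    (K : Finset (Fin n)) (w : Fin r → ℝ) : Prop :=
  K ∈ Fam ∧ w ∈ sigmaCone v K ∧ ∀ K' ∈ Fam, w ∈ sigmaCone v K' → K ⊆ K'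

/-- The cone `C_Σ` of the secondary fan corresponding to `Σ`. -/
def CSigma {r n : ℕ} (v : Fin n → Fin r → ℤ) (Fam : Finset (Finset (Fin n))) :
    Set (Fin n → ℝ) :=
  {η | ∀ I ∈ Fam, I.card = r → ∀ ℓ : (Fin r → ℝ) →ₗ[ℝ] ℝ,
    (∀ i ∈ I, ℓ (vR v i) = η i) → ∀ j, ℓ (vR v j) ≤ η j}

/-- The index set `L_{c,γ,σ;β}` of the Γ-series. -/
def Lset {r n : ℕ} (v : Fin n → Fin r → ℤ) (I0 : Finset (Fin n)) (β : Fin r → ℂ)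
    (c γ : Fin r → ℤ) : Set (Fin n → ℂ) :=
  {l | (∑ i, l i • vC v i) = β - intVecC c
    ∧ (∀ i ∉ I0, ∃ m : ℤ, l i = (m : ℂ))
    ∧ (∃ m : Fin n → ℤ,
        intVecC c + ∑ i ∈ I0ᶜ, l i • vC v i = -intVecC γ + ∑ i ∈ I0, (m i : ℂ) • vC v i)}

/-- An individual term `∏_i exp(l_i Log x_i)/Γ(1 + l_i)` of the Γ-series.  (Mathlib's
`Complex.Gamma` vanishes at the poles of `Γ`, so `1/Γ` is `0` there.) -/
def gammaTerm {n : ℕ} (l x : Fin n → ℂ) : ℂ :=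
  ∏ i, Complex.exp (l i * Complex.log (x i)) / Complex.Gamma (1 + l i)

/-- The region `R(ψ̂)`. -/
def Rregion {r n : ℕ} (v : Fin n → Fin r → ℤ) (Fam : Finset (Finset (Fin n)))
    (ψh : Fin n → ℝ) : Set (Fin n → ℂ) :=
  {x | (∀ i, x i ≠ 0 ∧ |Complex.arg (x i)| < Real.pi) ∧
    (fun i => -Real.log ‖x i‖ - ψh i) ∈ CSigma v Fam}

/-- The Γ-series `Φ^{γ,σ}_c` with parameter `β`. -/
def GammaSeries {r n : ℕ} (v : Fin n → Fin r → ℤ) (I0 : Finset (Fin n)) (β : Fin r → ℂ)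
    (γ c : Fin r → ℤ) (x : Fin n → ℂ) : ℂ :=
  ∑' l : (Lset v I0 β c γ), gammaTerm (l : Fin n → ℂ) x

/-- Absolute and uniform-on-compacts convergence of the Γ-series on a set `S`:
for every compact `K ⊆ S`, `∑_{l ∈ L} sup_{x ∈ K} |term_l(x)| < ∞`. -/
def ConvergesOn {r n : ℕ} (v : Fin n → Fin r → ℤ) (I0 : Finset (Fin n)) (β : Fin r → ℂ)
    (γ c : Fin r → ℤ) (S : Set (Fin n → ℂ)) : Prop :=
  ∀ K ⊆ S, IsCompact K →
    Summable (fun l : (Lset v I0 β c γ) =>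
      sSup ((fun x => ‖gammaTerm (l : Fin n → ℂ) x‖) '' K))

/-- `β ∈ ℂ^r` is generic: it lies in no proper affine subspace of `ℂ^r` defined over `ℚ`. -/
def GenericBeta {r : ℕ} (β : Fin r → ℂ) : Prop :=
  ∀ q : Fin r → ℚ, q ≠ 0 → ∀ q0 : ℚ, (∑ j, (q j : ℂ) * β j) ≠ (q0 : ℂ)


/-- Lemma on signs. -/
theorem statement0
    (r n : ℕ) (hr : 1 ≤ r) (hn : r ≤ n)
    (deg : (Fin r → ℝ) →ₗ[ℝ] ℝ)
    (hdegInt : ∀ m : Fin r → ℤ, ∃ k : ℤ, deg (intVec m) = (k : ℝ))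
    (v : Fin n → Fin r → ℤ)
    (hv_inj : Function.Injective v)
    (hv_span : Submodule.span ℝ (Set.range (vR v)) = ⊤)
    (hv_deg : ∀ i, deg (vR v i) = 1)
    (I : Finset (Fin n)) (hI : I.card = r)
    (hIindep : LinearIndependent ℝ (fun i : {x : Fin n // x ∈ I} => vR v i.1))
    (hIspan : Submodule.span ℝ (vR v '' (I : Set (Fin n))) = ⊤)
    (k : Fin n) (hk : k ∈ I) (j : Fin n) (hj : j ∉ I)
    (a : Fin n → ℝ) (ha0 : ∃ i ∈ insert j I, a i ≠ 0)
    (ha : ∑ i ∈ insert j I, a i • vR v i = 0)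
    (μ : (Fin r → ℝ) →ₗ[ℝ] ℝ)
    (hμk : μ (vR v k) = Vol v I)
    (hμ0 : ∀ i ∈ I, i ≠ k → μ (vR v i) = 0) :
    μ (vR v j) = - (Real.sign (a k) * Real.sign (a j) * Vol v ((insert j I).erase k)) := by
  classical
  -- basic facts
  have hjk : j ≠ k := fun h => hj (h ▸ hk)
  have h1 : a j • vR v j + ∑ i ∈ I, a i • vR v i = 0 := by
    rwa [Finset.sum_insert hj] at ha
  -- `a j ≠ 0`
  have haj : a j ≠ 0 := by
    intro h0
    have hsum : ∑ x : {x : Fin n // x ∈ I}, a x.1 • vR v x.1 = 0 := by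
      rw [Finset.sum_coe_sort I (fun i => a i • vR v i)]
      rw [h0, zero_smul, zero_add] at h1
      exact h1
    have hz := Fintype.linearIndependent_iff.mp hIindep (fun x => a x.1) hsum
    obtain ⟨i, hi, hai⟩ := ha0
    rcases Finset.mem_insert.mp hi with rfl | hiI
    · exact hai h0
    · exact hai (hz ⟨i, hiI⟩)
  set c : Fin n → ℝ := fun i => -(a i / a j) with hc
  -- `v j` as a combination of the basis
  have hcomb : vR v j = ∑ i ∈ I, c i • vR v i := by
    have h2 : a j • vR v j = -∑ i ∈ I, a i • vR v i :=
      eq_neg_of_add_eq_zero_left h1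
    calc vR v j = (a j)⁻¹ • (a j • vR v j) := by
          rw [smul_smul, inv_mul_cancel₀ haj, one_smul]
      _ = (a j)⁻¹ • (-∑ i ∈ I, a i • vR v i) := by rw [h2]
      _ = ∑ i ∈ I, c i • vR v i := by
          rw [smul_neg, Finset.smul_sum, ← Finset.sum_neg_distrib]
          refine Finset.sum_congr rfl fun i _ => ?_
          rw [smul_smul, ← neg_smul, hc]
          congr 1
          field_simp
  -- value of μ
  have hμj : μ (vR v j) = c k * Vol v I := by
    rw [hcomb, map_sum]
    rw [Finset.sum_eq_single_of_mem k hk]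
    · rw [map_smul, smul_eq_mul, hμk]
    · intro i hi hik
      rw [map_smul, smul_eq_mul, hμ0 i hi hik, mul_zero]
  -- the Volume computation
  set I' : Finset (Fin n) := (insert j I).erase k with hI'def
  have hkins : k ∈ insert j I := Finset.mem_insert_of_mem hk
  have hI' : I'.card = r := by
    rw [hI'def, Finset.card_erase_of_mem hkins, Finset.card_insert_of_notMem hj, hI]
    omega
  have hjI' : j ∈ I' := Finset.mem_erase.mpr ⟨hjk, Finset.mem_insert_self j I⟩
  set e := I.orderIsoOfFin hI with he
  set e' := I'.orderIsoOfFin hI' with he'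
  set M : Matrix (Fin r) (Fin r) ℝ := Matrix.of fun p q => vR v (e p).1 q with hM
  set M' : Matrix (Fin r) (Fin r) ℝ := Matrix.of fun p q => vR v (e' p).1 q with hM'
  have hVolI : Vol v I = |M.det| := by rw [Vol, dif_pos hI]
  have hVolI' : Vol v I' = |M'.det| := by rw [Vol, dif_pos hI']
  set p : Fin r := e'.symm ⟨j, hjI'⟩ with hp
  have hep : (e' p).1 = j := by rw [hp, OrderIso.apply_symm_apply]
  -- the index map `g`
  set g : Fin r → Fin n := fun q => if q = p then k else (e' q).1 with hg
  have hgp : g p = k := by simp [hg]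
  have hgmem : ∀ q, g q ∈ I := by
    intro q
    by_cases hq : q = p
    · simp [hg, hq, hk]
    · have h1 : (e' q).1 ∈ I' := (e' q).2
      have h2 : (e' q).1 ≠ j := by
        intro h
        apply hq
        have : (e' q) = (⟨j, hjI'⟩ : {x // x ∈ I'}) := Subtype.ext h
        rw [hp, ← this, OrderIso.symm_apply_apply]
      have h3 := Finset.mem_erase.mp h1
      rcases Finset.mem_insert.mp h3.2 with h | h
      · exact absurd h h2
      · simpa [hg, hq] using h
  have hgne : ∀ q, q ≠ p → g q ≠ k := by
    intro q hq
    have h1 : (e' q).1 ∈ I' := (e' q).2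
    simpa [hg, hq] using (Finset.mem_erase.mp h1).1
  have hginj : Function.Injective g := by
    intro x y hxy
    by_cases hx : x = p <;> by_cases hy : y = p
    · rw [hx, hy]
    · exact absurd (by rw [← hxy, hx, hgp]) (hgne y hy)
    · exact absurd (by rw [hxy, hy, hgp]) (hgne x hx)
    · have : (e' x).1 = (e' y).1 := by simpa [hg, hx, hy] using hxy
      exact e'.injective (Subtype.ext this)
  -- the permutation
  have hginj' : Function.Injective (fun q => (⟨g q, hgmem q⟩ : {x : Fin n // x ∈ I})) :=
    fun x y h => hginj (congrArg Subtype.val h)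
  have hbij : Function.Bijective (fun q => (⟨g q, hgmem q⟩ : {x : Fin n // x ∈ I})) := by
    rw [Fintype.bijective_iff_injective_and_card]
    exact ⟨hginj', by simp [Fintype.card_coe, hI]⟩
  set ε : Fin r ≃ {x : Fin n // x ∈ I} :=
    Equiv.ofBijective (fun q => (⟨g q, hgmem q⟩ : {x : Fin n // x ∈ I})) hbij with hε
  have hεval : ∀ q, (ε q).1 = g q := by
    intro q
    rw [hε]
    rfl
  set σ : Equiv.Perm (Fin r) := ε.trans e.toEquiv.symm with hσ
  have heσ : ∀ q, (e (σ q)).1 = g q := by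
    intro q
    rw [hσ]
    simp only [Equiv.trans_apply]
    rw [show e (e.toEquiv.symm (ε q)) = ε q from e.apply_symm_apply (ε q)]
    exact hεval q
  set N : Matrix (Fin r) (Fin r) ℝ := M.submatrix σ id with hN
  have hNrow : ∀ q, N q = vR v (g q) := by
    intro q
    funext b
    rw [hN]
    show M (σ q) b = _
    rw [hM]
    show vR v (e (σ q)).1 b = _
    rw [heσ]
  have hNdet : |N.det| = |M.det| := by
    rw [hN, Matrix.det_permute, abs_mul]
    rcases Int.units_eq_one_or (Equiv.Perm.sign σ) with h | h <;>
      simp [h]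
  -- M' is N with row p replaced by v j
  have hM'N : M' = N.updateRow p (∑ q, c (g q) • N q) := by
    have hsum : ∑ q, c (g q) • N q = vR v j := by
      rw [hcomb]
      rw [show (∑ i ∈ I, c i • vR v i) = ∑ x : {x : Fin n // x ∈ I}, c x.1 • vR v x.1 from
        (Finset.sum_coe_sort I fun i => c i • vR v i).symm]
      rw [← Equiv.sum_comp ε (fun x => c x.1 • vR v x.1)]
      refine Finset.sum_congr rfl fun q _ => ?_
      rw [hεval, hNrow]
    funext q
    by_cases hq : q = p
    · rw [hq, Matrix.updateRow_self, hsum]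
      show vR v (e' p).1 = vR v j
      rw [hep]
    · rw [Matrix.updateRow_ne hq, hNrow]
      show vR v (e' q).1 = vR v (g q)
      rw [hg]
      simp [hq]
  have hdetM' : M'.det = c k * N.det := by
    rw [hM'N, Matrix.det_updateRow_sum, hgp, smul_eq_mul]
  have hVol' : Vol v I' = |c k| * Vol v I := by
    rw [hVolI', hdetM', abs_mul, hNdet, hVolI]
  -- conclusion
  rw [hμj, hVol']
  have hVnn : 0 ≤ Vol v I := hVolI ▸ abs_nonneg _
  have hck : c k = -(a k / a j) := rfl
  rcases lt_trichotomy (a k) 0 with hak | hak | hak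
  · rcases haj.lt_or_gt with haj' | haj'
    · have h1 : Real.sign (a k) = -1 := Real.sign_of_neg hak
      have h2 : Real.sign (a j) = -1 := Real.sign_of_neg haj'
      have h3 : |c k| = a k / a j := by
        rw [hck, abs_neg, abs_div, abs_of_neg hak, abs_of_neg haj']
        ring
      rw [h1, h2, h3, hck]; ring
    · have h1 : Real.sign (a k) = -1 := Real.sign_of_neg hak
      have h2 : Real.sign (a j) = 1 := Real.sign_of_pos haj'
      have h3 : |c k| = -(a k / a j) := by
        rw [hck, abs_neg, abs_div, abs_of_neg hak, abs_of_pos haj']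
        ring
      rw [h1, h2, h3, hck]; ring
  · rw [hak, Real.sign_zero]
    simp [hck, hak]
  · rcases haj.lt_or_gt with haj' | haj'
    · have h1 : Real.sign (a k) = 1 := Real.sign_of_pos hak
      have h2 : Real.sign (a j) = -1 := Real.sign_of_neg haj'
      have h3 : |c k| = -(a k / a j) := by
        rw [hck, abs_neg, abs_div, abs_of_pos hak, abs_of_neg haj']
        ring
      rw [h1, h2, h3, hck]; ring
    · have h1 : Real.sign (a k) = 1 := Real.sign_of_pos hak
      have h2 : Real.sign (a j) = 1 := Real.sign_of_pos haj'
      have h3 : |c k| = a k / a j := by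
        rw [hck, abs_neg, abs_div, abs_of_pos hak, abs_of_pos haj']
      rw [h1, h2, h3, hck]; ring

end BBGKZ
end
end

section
/- Suppose ξ_{c,d,I} ∈ ℂ is given for every c ∈ C ∩ ℤ^r, d ∈ C° ∩ ℤ^r and I ⊆ {1,…,n} with |I| = r and c + d = v_I, and suppose that for every spanning subset J ⊆ {1,…,n}, every nonzero tuple (a_i)_{i∈J} with ∑_{i∈J} a_i v_i = 0, and all c ∈ C ∩ ℤ^r, d ∈ C° ∩ ℤ^r with c + d = v_J, one has 0 = ∑_{j∈J} sign(a_j) · ( ξ_{c−v_j, d, J∖{j}} · [c − v_j ∈ C] + ξ_{c, d−v_j, J∖{j}} · [d − v_j ∈ C°] ), where [·] denotes the indicator of the stated condition (a summand is read as 0 when its indicator vanishes). Then for every open connected U ⊆ (ℂ∖{0})^n and every pair of solutions Φ of bbGKZ(C,0) and Ψ of bbGKZ(C°,0) on U, the function x ↦ ∑_{I ⊆ {1,…,n}, |I| = r} ∑_{c ∈ C∩ℤ^r, d ∈ C°∩ℤ^r, c + d = v_I} ξ_{c,d,I} · Vol_I · (∏_{i∈I} x_i) · Φ_c(x) · Ψ_d(x)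 (a finite sum) is constant on U. -/
open scoped BigOperators Classical

noncomputable section

namespace BBGKZ

section AuxBasic



variable {r n : ℕ} {v : Fin n → Fin r → ℤ}

lemma intVec_add (a b : Fin r → ℤ) : intVec (a + b) = intVec a + intVec b := by
  funext j; simp [intVec]

lemma intVec_sub (a b : Fin r → ℤ) : intVec (a - b) = intVec a - intVec b := by
  funext j; simp [intVec]

lemma intVec_v (v : Fin n → Fin r → ℤ) (i : Fin n) : intVec (v i) = vR v i := rfl

lemma intVec_vSum (v : Fin n → Fin r → ℤ) (I : Finset (Fin n)) :
    intVec (vSum v I) = ∑ i ∈ I, vR v i := by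
  funext j
  simp [intVec, vSum, vR, Finset.sum_apply]

lemma vR_mem_coneC (v : Fin n → Fin r → ℤ) (i : Fin n) : vR v i ∈ coneC v := by
  refine ⟨fun i' => if i' = i then 1 else 0, fun i' => by dsimp only; split <;> norm_num, ?_⟩
  simp [ite_smul]

lemma coneC_add {x y : Fin r → ℝ} (hx : x ∈ coneC v) (hy : y ∈ coneC v) :
    x + y ∈ coneC v := by
  obtain ⟨t, ht, rfl⟩ := hx
  obtain ⟨s, hs, rfl⟩ := hy
  exact ⟨t + s, fun i => add_nonneg (ht i) (hs i), by
    rw [← Finset.sum_add_distrib]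
    exact Finset.sum_congr rfl fun i _ => by simp [add_smul]⟩

lemma interior_coneC_add {x y : Fin r → ℝ} (hx : x ∈ interior (coneC v))
    (hy : y ∈ coneC v) : x + y ∈ interior (coneC v) := by
  have hsub : (fun z => z + y) '' interior (coneC v) ⊆ coneC v := by
    rintro _ ⟨z, hz, rfl⟩
    exact coneC_add (interior_subset hz) hy
  have hopen : IsOpen ((fun z => z + y) '' interior (coneC v)) :=
    (isOpenMap_add_right y) _ isOpen_interior
  exact interior_maximal hsub hopen ⟨x, hx, rfl⟩

/-- A bound for the coordinates of the generating vectors. -/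
def M0 {r n : ℕ} (v : Fin n → Fin r → ℤ) : ℝ := (∑ i, ∑ j, |vR v i j|) + 1

lemma one_le_M0 (v : Fin n → Fin r → ℤ) : 1 ≤ M0 v := by
  have : (0:ℝ) ≤ ∑ i, ∑ j, |vR v i j| :=
    Finset.sum_nonneg fun i _ => Finset.sum_nonneg fun j _ => abs_nonneg _
  simp only [M0]; linarith

lemma abs_vR_le_M0 (v : Fin n → Fin r → ℤ) (i : Fin n) (j : Fin r) : |vR v i j| ≤ M0 v := by
  have h1 : |vR v i j| ≤ ∑ j', |vR v i j'| :=
    Finset.single_le_sum (f := fun j' => |vR v i j'|) (fun _ _ => abs_nonneg _)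
      (Finset.mem_univ _)
  have h2 : ∑ j', |vR v i j'| ≤ ∑ i', ∑ j', |vR v i' j'| :=
    Finset.single_le_sum (f := fun i' => ∑ j', |vR v i' j'|)
      (fun _ _ => Finset.sum_nonneg fun _ _ => abs_nonneg _) (Finset.mem_univ _)
  simp only [M0]; linarith

lemma coneC_deg (deg : (Fin r → ℝ) →ₗ[ℝ] ℝ) (hv_deg : ∀ i, deg (vR v i) = 1)
    {x : Fin r → ℝ} (hx : x ∈ coneC v) : 0 ≤ deg x ∧ ∀ j, |x j| ≤ deg x * M0 v := by
  obtain ⟨t, ht, rfl⟩ := hx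
  have hdeg : deg (∑ i, t i • vR v i) = ∑ i, t i := by
    rw [map_sum]
    simp [map_smul, hv_deg]
  constructor
  · rw [hdeg]; exact Finset.sum_nonneg fun i _ => ht i
  · intro j
    have h1 : (∑ i, t i • vR v i) j = ∑ i, t i * vR v i j := by
      simp [Finset.sum_apply]
    rw [h1, hdeg]
    calc |∑ i, t i * vR v i j| ≤ ∑ i, |t i * vR v i j| := Finset.abs_sum_le_sum_abs _ _
      _ ≤ ∑ i, t i * M0 v := Finset.sum_le_sum fun i _ => by
          rw [abs_mul, abs_of_nonneg (ht i)]
          exact mul_le_mul_of_nonneg_left (abs_vR_le_M0 v i j) (ht i)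
      _ = (∑ i, t i) * M0 v := by rw [Finset.sum_mul]

/-- A big box of lattice points containing all the lattice points of the cone of
degree at most `r+1`. -/
def bigT {r n : ℕ} (v : Fin n → Fin r → ℤ) : Finset (Fin r → ℤ) :=
  Finset.Icc (fun _ => -⌈((r : ℝ) + 1) * M0 v⌉) (fun _ => ⌈((r : ℝ) + 1) * M0 v⌉)

lemma mem_bigT (deg : (Fin r → ℝ) →ₗ[ℝ] ℝ) (hv_deg : ∀ i, deg (vR v i) = 1)
    {c : Fin r → ℤ} (hc : intVec c ∈ coneC v)
    (hdeg : deg (intVec c) ≤ (r : ℝ) + 1) : c ∈ bigT v := by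
  obtain ⟨h0, habs⟩ := coneC_deg deg hv_deg hc
  have hM0 : (0:ℝ) ≤ M0 v := le_trans zero_le_one (one_le_M0 v)
  have hbound : ∀ j, |(c j : ℝ)| ≤ (⌈((r : ℝ) + 1) * M0 v⌉ : ℝ) := by
    intro j
    have h1 : |(c j : ℝ)| ≤ deg (intVec c) * M0 v := habs j
    have h2 : deg (intVec c) * M0 v ≤ ((r : ℝ) + 1) * M0 v :=
      mul_le_mul_of_nonneg_right hdeg hM0
    exact le_trans (le_trans h1 h2) (Int.le_ceil _)
  rw [bigT, Finset.mem_Icc]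
  constructor <;> (rw [Pi.le_def]; intro j) <;>
    [ (have := (abs_le.mp (hbound j)).1; exact_mod_cast this);
      (have := (abs_le.mp (hbound j)).2; exact_mod_cast this)]

lemma sum_shift {γ : Type*} [AddCommGroup γ] [DecidableEq γ] (T : Finset γ) (h : γ → ℂ)
    (a : γ) (H1 : ∀ c, h c ≠ 0 → c ∈ T) (H2 : ∀ c, h c ≠ 0 → c - a ∈ T) :
    ∑ c ∈ T, h (c + a) = ∑ c ∈ T, h c := by
  have hinj : ∀ x ∈ T, ∀ y ∈ T, x + a = y + a → x = y := fun x _ y _ e => by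
    exact add_right_cancel e
  have e1 : ∑ c ∈ T.image (· + a), h c = ∑ c ∈ T, h (c + a) := Finset.sum_image hinj
  rw [← e1]
  have e2 : ∑ c ∈ T.image (· + a), h c = ∑ c ∈ T.image (· + a) ∪ T, h c := by
    apply Finset.sum_subset Finset.subset_union_left
    intro c _ hc
    by_contra hne
    exact hc (Finset.mem_image.mpr ⟨c - a, H2 c hne, by abel⟩)
  have e3 : ∑ c ∈ T, h c = ∑ c ∈ T.image (· + a) ∪ T, h c := by
    apply Finset.sum_subset Finset.subset_union_right
    intro c _ hc
    by_contra hne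
    exact hc (H1 c hne)
  rw [e2, e3]

lemma self_mul_sign (y : ℝ) : y * Real.sign y = |y| := by
  rcases lt_trichotomy y 0 with h | h | h
  · rw [Real.sign_of_neg h, abs_of_neg h]; ring
  · simp [h]
  · rw [Real.sign_of_pos h, abs_of_pos h]; ring



end AuxBasic
section AuxLin

variable {r n : ℕ} {v : Fin n → Fin r → ℤ}

lemma exists_dualMu (v : Fin n → Fin r → ℤ) (I : Finset (Fin n)) (hcard : I.card = r)
    (hvol : Vol v I ≠ 0) (k : Fin n) (hk : k ∈ I) :
    ∃ μ : (Fin r → ℝ) →ₗ[ℝ] ℝ, ∀ i ∈ I, μ (vR v i) = if i = k then 1 else 0 := by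
  set M : Matrix (Fin r) (Fin r) ℝ :=
    Matrix.of fun a b : Fin r => vR v ((I.orderIsoOfFin hcard a) : Fin n) b with hM
  have hdet : IsUnit M.det := by
    rw [Vol, dif_pos hcard] at hvol
    exact isUnit_iff_ne_zero.mpr (abs_ne_zero.mp hvol)
  set a0 := (I.orderIsoOfFin hcard).symm ⟨k, hk⟩ with ha0
  refine ⟨{ toFun := fun x => Matrix.vecMul x M⁻¹ a0,
            map_add' := fun x y => by rw [Matrix.add_vecMul]; rfl,
            map_smul' := fun c x => by rw [Matrix.smul_vecMul]; rfl }, ?_⟩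
  intro i hi
  set a := (I.orderIsoOfFin hcard).symm ⟨i, hi⟩ with ha
  have hMa : vR v i = M a := by
    funext b
    simp only [hM, Matrix.of_apply, ha, OrderIso.apply_symm_apply]
  simp only [LinearMap.coe_mk, AddHom.coe_mk, hMa]
  have hvm : Matrix.vecMul (M a) M⁻¹ = (M * M⁻¹) a := by
    funext b
    simp [Matrix.vecMul, dotProduct, Matrix.mul_apply]
  rw [hvm, Matrix.mul_nonsing_inv _ hdet, Matrix.one_apply]
  have hiff : a = a0 ↔ i = k := by
    constructor
    · intro h
      have := congrArg (fun z => ((I.orderIsoOfFin hcard) z : Fin n)) h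
      simpa [ha, ha0, OrderIso.apply_symm_apply] using this
    · intro h; subst h; rfl
  by_cases h : i = k
  · rw [if_pos (hiff.mpr h), if_pos h]
  · rw [if_neg (fun hh => h (hiff.mp hh)), if_neg h]

lemma span_top_of_vol_ne_zero (v : Fin n → Fin r → ℤ) (I : Finset (Fin n))
    (hcard : I.card = r) (hvol : Vol v I ≠ 0) :
    Submodule.span ℝ (vR v '' (I : Set (Fin n))) = ⊤ := by
  set M : Matrix (Fin r) (Fin r) ℝ :=
    Matrix.of fun a b : Fin r => vR v ((I.orderIsoOfFin hcard a) : Fin n) b with hM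
  have hdet : IsUnit M.det := by
    rw [Vol, dif_pos hcard] at hvol
    exact isUnit_iff_ne_zero.mpr (abs_ne_zero.mp hvol)
  rw [eq_top_iff]
  rintro x -
  have hx : x = ∑ a : Fin r, Matrix.vecMul x M⁻¹ a • M a := by
    have h1 : Matrix.vecMul (Matrix.vecMul x M⁻¹) M = x := by
      rw [Matrix.vecMul_vecMul, Matrix.nonsing_inv_mul _ hdet, Matrix.vecMul_one]
    conv_lhs => rw [← h1]
    funext b
    simp [Matrix.vecMul, dotProduct, Finset.sum_apply]
  rw [hx]
  refine Submodule.sum_mem _ fun a _ => Submodule.smul_mem _ _ (Submodule.subset_span ?_)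
  exact ⟨((I.orderIsoOfFin hcard a) : Fin n), by simp, rfl⟩

lemma laplace_relation {r : ℕ} (w : Fin (r + 1) → Fin r → ℝ) :
    ∑ p : Fin (r + 1),
      ((-1 : ℝ) ^ (p : ℕ) * (Matrix.of fun a b => w (p.succAbove a) b).det) • w p = 0 := by
  funext c
  rw [Finset.sum_apply]
  simp only [Pi.smul_apply, smul_eq_mul, Pi.zero_apply]
  set A : Matrix (Fin (r + 1)) (Fin (r + 1)) ℝ :=
    Matrix.of fun p q => Fin.cases (w p c) (fun b => w p b) q with hA
  have h0 : A.det = 0 := by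
    apply Matrix.det_zero_of_column_eq (show (0 : Fin (r + 1)) ≠ c.succ from
      (Fin.succ_ne_zero c).symm)
    intro p
    simp [hA]
  have h1 := Matrix.det_succ_column_zero A
  rw [h0] at h1
  have h2 : ∀ p : Fin (r + 1),
      A.submatrix p.succAbove Fin.succ = Matrix.of fun a b => w (p.succAbove a) b := by
    intro p; ext a b
    simp [hA, Matrix.submatrix_apply]
  have h3 : ∀ p : Fin (r + 1), A p 0 = w p c := by
    intro p; simp [hA]
  calc ∑ p : Fin (r + 1),
        (-1 : ℝ) ^ (p : ℕ) * (Matrix.of fun a b => w (p.succAbove a) b).det * w p c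
      = ∑ p : Fin (r + 1), (-1 : ℝ) ^ (p : ℕ) * A p 0 * (A.submatrix p.succAbove Fin.succ).det := by
        refine Finset.sum_congr rfl fun p _ => ?_
        rw [h2 p, h3 p]; ring
    _ = 0 := h1.symm

lemma abs_det_eq_of_range (v : Fin n → Fin r → ℤ) (f g : Fin r → Fin n)
    (hf : Function.Injective f) (hg : Function.Injective g)
    (hfg : ∀ a, ∃ b, g b = f a) :
    |(Matrix.of fun a b => vR v (f a) b).det| = |(Matrix.of fun a b => vR v (g a) b).det| := by
  choose h hh using hfg
  have hinj : Function.Injective h := fun a a' e => hf (by rw [← hh, ← hh, e])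
  have hbij : Function.Bijective h := Finite.injective_iff_bijective.mp hinj
  set σ : Equiv.Perm (Fin r) := Equiv.ofBijective h hbij with hσ
  have hmat : (Matrix.of fun a b => vR v (f a) b)
      = (Matrix.of fun a b => vR v (g a) b).submatrix σ id := by
    ext a b
    simp only [Matrix.submatrix_apply, Matrix.of_apply, id_eq, hσ, Equiv.ofBijective_apply, hh]
  rw [hmat, Matrix.det_permute]
  rw [abs_mul]
  rcases Int.units_eq_one_or (Equiv.Perm.sign σ) with hs | hs <;> simp [hs]

lemma vol_erase (v : Fin n → Fin r → ℤ) (J : Finset (Fin n)) (hJ : J.card = r + 1)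
    (p : Fin (r + 1)) :
    Vol v (J.erase ((J.orderIsoOfFin hJ p) : Fin n)) =
      |(Matrix.of fun a b => vR v ((J.orderIsoOfFin hJ (p.succAbove a)) : Fin n) b).det| := by
  set ι := J.orderIsoOfFin hJ with hι
  set j : Fin n := (ι p : Fin n) with hj
  have hjJ : j ∈ J := (ι p).2
  have hcard : (J.erase j).card = r := by
    rw [Finset.card_erase_of_mem hjJ, hJ]
    rfl
  rw [Vol, dif_pos hcard]
  apply abs_det_eq_of_range v
  · intro a a' e
    exact ((J.erase j).orderIsoOfFin hcard).injective (Subtype.coe_injective e)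
  · intro a a' e
    exact Fin.succAbove_right_injective (ι.injective (Subtype.coe_injective e))
  · intro a
    set i : Fin n := (((J.erase j).orderIsoOfFin hcard a) : Fin n) with hi
    have hiJe : i ∈ J.erase j := ((J.erase j).orderIsoOfFin hcard a).2
    have hiJ : i ∈ J := Finset.mem_of_mem_erase hiJe
    have hij : i ≠ j := Finset.ne_of_mem_erase hiJe
    set q := ι.symm ⟨i, hiJ⟩ with hq
    have hqp : q ≠ p := by
      intro e
      apply hij
      have : (ι q : Fin n) = i := by rw [hq, OrderIso.apply_symm_apply]
      rw [← this, e, ← hj]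
    obtain ⟨b, hb⟩ := Fin.exists_succAbove_eq hqp
    refine ⟨b, ?_⟩
    rw [hb, hq, OrderIso.apply_symm_apply]

end AuxLin
section AuxAnalytic

variable {r n : ℕ}

lemma hasFDerivAt_mon (I : Finset (Fin n)) (z : Fin n → ℂ) :
    HasFDerivAt (fun x : Fin n → ℂ => ∏ i ∈ I, x i)
      (∑ i ∈ I, (∏ j ∈ I.erase i, z j) • (ContinuousLinearMap.proj i :
        (Fin n → ℂ) →L[ℂ] ℂ)) z := by
  apply HasFDerivAt.finset_prod
  intro i _
  exact (ContinuousLinearMap.proj i : (Fin n → ℂ) →L[ℂ] ℂ).hasFDerivAt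

lemma mon_deriv_apply (I : Finset (Fin n)) (z : Fin n → ℂ) (k : Fin n) :
    (∑ i ∈ I, (∏ j ∈ I.erase i, z j) • (ContinuousLinearMap.proj i :
        (Fin n → ℂ) →L[ℂ] ℂ)) (Pi.single k (1:ℂ))
      = if k ∈ I then ∏ j ∈ I.erase k, z j else 0 := by
  rw [ContinuousLinearMap.sum_apply]
  simp only [ContinuousLinearMap.smul_apply, ContinuousLinearMap.proj_apply, smul_eq_mul]
  have h1 : ∀ i ∈ I, (∏ j ∈ I.erase i, z j) * (Pi.single k (1:ℂ) : Fin n → ℂ) i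
      = if i = k then ∏ j ∈ I.erase i, z j else 0 := by
    intro i _
    rw [Pi.single_apply]
    by_cases h : i = k <;> simp [h]
  rw [Finset.sum_congr rfl h1, Finset.sum_ite_eq' I k (fun i => ∏ j ∈ I.erase i, z j)]

lemma const_of_locally_const {U : Set (Fin n → ℂ)} (hU : IsOpen U)
    (hconn : IsPreconnected U) {f : (Fin n → ℂ) → ℂ}
    (hloc : ∀ z ∈ U, ∀ᶠ w in nhds z, f w = f z) :
    ∀ x ∈ U, ∀ y ∈ U, f x = f y := by
  intro x hx y hy
  by_contra hne
  set A : Set (Fin n → ℂ) := {w | w ∈ U ∧ f w = f x} with hA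
  set B : Set (Fin n → ℂ) := {w | w ∈ U ∧ f w ≠ f x} with hB
  have hAopen : IsOpen A := by
    rw [isOpen_iff_mem_nhds]
    intro w hw
    have h1 : ∀ᶠ w' in nhds w, w' ∈ U := hU.mem_nhds hw.1
    have h2 := hloc w hw.1
    filter_upwards [h1, h2] with w' hw1 hw2
    exact ⟨hw1, hw2.trans hw.2⟩
  have hBopen : IsOpen B := by
    rw [isOpen_iff_mem_nhds]
    intro w hw
    have h1 : ∀ᶠ w' in nhds w, w' ∈ U := hU.mem_nhds hw.1
    have h2 := hloc w hw.1
    filter_upwards [h1, h2] with w' hw1 hw2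
    exact ⟨hw1, fun h => hw.2 (hw2 ▸ h)⟩
  obtain ⟨w, -, hwA, hwB⟩ := hconn A B hAopen hBopen
    (fun w hw => by by_cases h : f w = f x
                    · exact Or.inl ⟨hw, h⟩
                    · exact Or.inr ⟨hw, h⟩)
    ⟨x, hx, hx, rfl⟩ ⟨y, hy, hy, fun h => hne h.symm⟩
  exact hwB.2 hwA.2

end AuxAnalytic
section AuxKey

variable {r n : ℕ}

/-- The elementary summand in the reorganized derivative sum. -/
def eFun (v : Fin n → Fin r → ℤ) (ξ : (Fin r → ℤ) → (Fin r → ℤ) → Finset (Fin n) → ℂ)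
    (mu : Finset (Fin n) → (Fin r → ℝ) →ₗ[ℝ] ℝ) (x : Fin n → ℂ)
    (P Q : (Fin r → ℤ) → ℂ) (k : Fin n)
    (I : Finset (Fin n)) (i : Fin n) (c : Fin r → ℤ) : ℂ :=
  if (i ∉ I ∧ k ∈ insert i I) ∧
      ((intVec c ∈ coneC v ∧ intVec (vSum v I - c) ∈ interior (coneC v)) ∧ Vol v I ≠ 0) then
    ξ c (vSum v I - c) I * (Vol v I : ℂ) *
      (if i = k then 1 else -((mu I (vR v i) : ℝ) : ℂ)) *
      (∏ j ∈ (insert i I).erase k, x j) *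
      (P (c + v i) * Q (vSum v I - c) + P c * Q (vSum v I - c + v i))
  else 0

lemma stepAB (v : Fin n → Fin r → ℤ) (ξ : (Fin r → ℤ) → (Fin r → ℤ) → Finset (Fin n) → ℂ)
    (mu : Finset (Fin n) → (Fin r → ℝ) →ₗ[ℝ] ℝ) (x : Fin n → ℂ)
    (P Q : (Fin r → ℤ) → ℂ) (k : Fin n)
    (hmu : ∀ I : Finset (Fin n), (I.card = r ∧ Vol v I ≠ 0 ∧ k ∈ I) →
      ∀ i ∈ I, mu I (vR v i) = if i = k then 1 else 0)
    (hP : ∀ c, intVec c ∈ coneC v → ∀ μ : (Fin r → ℝ) →ₗ[ℝ] ℝ,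
      ∑ i, (μ (vR v i) : ℂ) * x i * P (c + v i) + (μ (intVec c) : ℂ) * P c = 0)
    (hQ : ∀ d, intVec d ∈ interior (coneC v) → ∀ μ : (Fin r → ℝ) →ₗ[ℝ] ℝ,
      ∑ i, (μ (vR v i) : ℂ) * x i * Q (d + v i) + (μ (intVec d) : ℂ) * Q d = 0)
    (I : Finset (Fin n)) (hIcard : I.card = r) (c : Fin r → ℤ) :
    (if intVec c ∈ coneC v ∧ intVec (vSum v I - c) ∈ interior (coneC v) then
      ξ c (vSum v I - c) I * (Vol v I : ℂ) *
        ((if k ∈ I then ∏ j ∈ I.erase k, x j else 0) * P c * Q (vSum v I - c) +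
         (∏ i ∈ I, x i) *
           (P (c + v k) * Q (vSum v I - c) + P c * Q (vSum v I - c + v k)))
    else 0) = ∑ i : Fin n, eFun v ξ mu x P Q k I i c := by
  by_cases hχ : intVec c ∈ coneC v ∧ intVec (vSum v I - c) ∈ interior (coneC v)
  case neg =>
    rw [if_neg hχ]
    symm
    apply Finset.sum_eq_zero
    intro i _
    simp only [eFun]
    exact if_neg (by tauto)
  by_cases hvol : Vol v I = 0
  · rw [if_pos hχ, hvol,
      Finset.sum_eq_zero (fun i (_ : i ∈ Finset.univ) =>
        (by simp only [eFun]; exact if_neg (by tauto) :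
          eFun v ξ mu x P Q k I i c = 0))]
    push_cast
    ring
  rw [if_pos hχ]
  by_cases hkI : k ∈ I
  · -- case k ∈ I : use the Euler equations
    have hμval : ∀ i ∈ I, mu I (vR v i) = if i = k then 1 else 0 := hmu I ⟨hIcard, hvol, hkI⟩
    have hμcd : (mu I (intVec c) : ℂ) + (mu I (intVec (vSum v I - c)) : ℂ) = 1 := by
      have h1 : mu I (intVec c) + mu I (intVec (vSum v I - c)) = 1 := by
        rw [← map_add, ← intVec_add,
          show c + (vSum v I - c) = vSum v I by abel, intVec_vSum, map_sum,
          Finset.sum_congr rfl hμval, Finset.sum_ite_eq' I k (fun _ => (1:ℝ)), if_pos hkI]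
      exact_mod_cast h1
    have hsum : ∑ i : Fin n, (mu I (vR v i) : ℂ) * x i *
        (P (c + v i) * Q (vSum v I - c) + P c * Q (vSum v I - c + v i))
        + P c * Q (vSum v I - c) = 0 := by
      have e1 : ∑ i : Fin n, (mu I (vR v i) : ℂ) * x i *
          (P (c + v i) * Q (vSum v I - c) + P c * Q (vSum v I - c + v i))
          = (∑ i, (mu I (vR v i) : ℂ) * x i * P (c + v i)) * Q (vSum v I - c)
            + (∑ i, (mu I (vR v i) : ℂ) * x i * Q (vSum v I - c + v i)) * P c := by
        rw [Finset.sum_mul, Finset.sum_mul, ← Finset.sum_add_distrib]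
        exact Finset.sum_congr rfl fun i _ => by ring
      rw [e1]
      have h1' := hP c hχ.1 (mu I)
      have h2' := hQ (vSum v I - c) hχ.2 (mu I)
      linear_combination Q (vSum v I - c) * h1' + P c * h2' - (P c * Q (vSum v I - c)) * hμcd
    have hIpart : ∑ i ∈ I, (mu I (vR v i) : ℂ) * x i *
        (P (c + v i) * Q (vSum v I - c) + P c * Q (vSum v I - c + v i))
        = x k * (P (c + v k) * Q (vSum v I - c) + P c * Q (vSum v I - c + v k)) := by
      have h2 : ∀ i ∈ I, (mu I (vR v i) : ℂ) * x i *
          (P (c + v i) * Q (vSum v I - c) + P c * Q (vSum v I - c + v i))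
          = if i = k then x i * (P (c + v i) * Q (vSum v I - c)
              + P c * Q (vSum v I - c + v i)) else 0 := by
        intro i hi
        rw [hμval i hi]
        by_cases h : i = k <;> simp [h]
      rw [Finset.sum_congr rfl h2, Finset.sum_ite_eq' I k
        (fun i => x i * (P (c + v i) * Q (vSum v I - c) + P c * Q (vSum v I - c + v i))),
        if_pos hkI]
    have hsplit := Finset.sum_add_sum_compl I (fun i => (mu I (vR v i) : ℂ) * x i *
        (P (c + v i) * Q (vSum v I - c) + P c * Q (vSum v I - c + v i)))
    have hcompl : ∑ i ∈ Iᶜ, (mu I (vR v i) : ℂ) * x i *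
        (P (c + v i) * Q (vSum v I - c) + P c * Q (vSum v I - c + v i))
        = -(P c * Q (vSum v I - c))
          - x k * (P (c + v k) * Q (vSum v I - c) + P c * Q (vSum v I - c + v k)) := by
      linear_combination hsplit + hsum - hIpart
    have hRHS : ∑ i : Fin n, eFun v ξ mu x P Q k I i c
        = ∑ i ∈ Iᶜ, (-(ξ c (vSum v I - c) I * (Vol v I : ℂ) * (∏ j ∈ I.erase k, x j)))
            * ((mu I (vR v i) : ℂ) * x i *
              (P (c + v i) * Q (vSum v I - c) + P c * Q (vSum v I - c + v i))) := by
      rw [← Finset.sum_add_sum_compl I (fun i => eFun v ξ mu x P Q k I i c),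
        Finset.sum_eq_zero (fun i (hi : i ∈ I) =>
          (by simp only [eFun]; exact if_neg (by tauto) : eFun v ξ mu x P Q k I i c = 0)),
        zero_add]
      refine Finset.sum_congr rfl fun i hi => ?_
      have hiI : i ∉ I := Finset.mem_compl.mp hi
      have hik : i ≠ k := fun h => hiI (h ▸ hkI)
      simp only [eFun]
      rw [if_pos ⟨⟨hiI, Finset.mem_insert_of_mem hkI⟩, hχ, hvol⟩, if_neg hik,
        Finset.erase_insert_of_ne hik,
        Finset.prod_insert (fun h => hiI (Finset.mem_of_mem_erase h))]
      ring
    rw [hRHS, ← Finset.mul_sum, hcompl, if_pos hkI,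
      show ∏ i ∈ I, x i = x k * ∏ j ∈ I.erase k, x j from (Finset.mul_prod_erase I _ hkI).symm]
    ring
  · -- case k ∉ I
    rw [if_neg hkI]
    symm
    rw [Finset.sum_eq_single k
      (fun i _ hik => by
        simp only [eFun]
        apply if_neg
        rintro ⟨⟨hiI, hkins⟩, -⟩
        rcases Finset.mem_insert.mp hkins with h | h
        · exact hik h.symm
        · exact hkI h)
      (fun h => absurd (Finset.mem_univ k) h)]
    simp only [eFun]
    rw [if_pos ⟨⟨hkI, Finset.mem_insert_self k I⟩, hχ, hvol⟩, Finset.erase_insert hkI]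
    simp only [if_true]
    ring

end AuxKey
section AuxBracket

variable {r n : ℕ}

lemma exists_relation (v : Fin n → Fin r → ℤ) (J : Finset (Fin n)) (hJcard : J.card = r + 1) :
    ∃ aa : Fin n → ℝ, (∀ i, i ∉ J → aa i = 0) ∧ (∀ i ∈ J, |aa i| = Vol v (J.erase i)) ∧
      (∑ i ∈ J, aa i • vR v i = 0) := by
  set ι := J.orderIsoOfFin hJcard with hι
  set bst : Fin (r + 1) → ℝ := fun p =>
    (-1 : ℝ) ^ (p : ℕ) * (Matrix.of fun a b => vR v ((ι (p.succAbove a)) : Fin n) b).det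
    with hbst
  refine ⟨fun i => if h : i ∈ J then bst (ι.symm ⟨i, h⟩) else 0, ?_, ?_, ?_⟩
  · intro i hi
    exact dif_neg hi
  · intro i hi
    dsimp only
    rw [dif_pos hi]
    have h2 := vol_erase v J hJcard (ι.symm ⟨i, hi⟩)
    have h3 : ((ι (ι.symm ⟨i, hi⟩)) : Fin n) = i := by rw [OrderIso.apply_symm_apply]
    rw [h3] at h2
    rw [h2, hbst]
    rw [abs_mul, abs_pow, abs_neg, abs_one, one_pow, one_mul]
  · have hre : ∑ p : Fin (r + 1), bst p • vR v ((ι p) : Fin n)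
        = ∑ i ∈ J, (if h : i ∈ J then bst (ι.symm ⟨i, h⟩) else 0) • vR v i := by
      apply Finset.sum_bij (i := fun p (_ : p ∈ Finset.univ) => ((ι p) : Fin n))
      · intro p _; exact (ι p).2
      · intro p _ q _ e; exact ι.injective (Subtype.coe_injective e)
      · intro i hi; exact ⟨ι.symm ⟨i, hi⟩, Finset.mem_univ _, by rw [OrderIso.apply_symm_apply]⟩
      · intro p _
        rw [dif_pos (ι p).2]
        congr 2
        rw [show (⟨((ι p) : Fin n), (ι p).2⟩ : {y // y ∈ J}) = ι p from Subtype.coe_eta _ _,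
          OrderIso.symm_apply_apply]
    rw [← hre, hbst]
    exact laplace_relation (fun p => vR v ((ι p) : Fin n))

lemma bracket (v : Fin n → Fin r → ℤ) (ξ : (Fin r → ℤ) → (Fin r → ℤ) → Finset (Fin n) → ℂ)
    (hξ : ∀ J : Finset (Fin n), J.card = r + 1 →
      Submodule.span ℝ (vR v '' (J : Set (Fin n))) = ⊤ →
      ∀ a : Fin n → ℝ, (∃ i ∈ J, a i ≠ 0) → (∑ i ∈ J, a i • vR v i = 0) →
      ∀ c d : Fin r → ℤ, intVec c ∈ coneC v → intVec d ∈ interior (coneC v) →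
        c + d = vSum v J →
        0 = ∑ j ∈ J, (Real.sign (a j) : ℂ) *
          ((if intVec (c - v j) ∈ coneC v then ξ (c - v j) d (J.erase j) else 0) +
           (if intVec (d - v j) ∈ interior (coneC v) then ξ c (d - v j) (J.erase j) else 0)))
    (mu : Finset (Fin n) → (Fin r → ℝ) →ₗ[ℝ] ℝ) (k : Fin n)
    (hmu : ∀ I : Finset (Fin n), (I.card = r ∧ Vol v I ≠ 0 ∧ k ∈ I) →
      ∀ i ∈ I, mu I (vR v i) = if i = k then 1 else 0)
    (x : Fin n → ℂ) (P Q : (Fin r → ℤ) → ℂ)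
    (J : Finset (Fin n)) (hJcard : J.card = r + 1) (hkJ : k ∈ J) (c : Fin r → ℤ) :
    ∑ i ∈ J,
      ((if (intVec (c - v i) ∈ coneC v ∧ intVec (vSum v J - c) ∈ interior (coneC v)) ∧
            Vol v (J.erase i) ≠ 0 then
          ξ (c - v i) (vSum v J - c) (J.erase i) * (Vol v (J.erase i) : ℂ) *
            (if i = k then 1 else -((mu (J.erase i) (vR v i) : ℝ) : ℂ)) *
            (∏ j ∈ J.erase k, x j) * (P c * Q (vSum v J - c))
        else 0) +
       (if (intVec c ∈ coneC v ∧ intVec (vSum v J - c - v i) ∈ interior (coneC v)) ∧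
            Vol v (J.erase i) ≠ 0 then
          ξ c (vSum v J - c - v i) (J.erase i) * (Vol v (J.erase i) : ℂ) *
            (if i = k then 1 else -((mu (J.erase i) (vR v i) : ℝ) : ℂ)) *
            (∏ j ∈ J.erase k, x j) * (P c * Q (vSum v J - c))
        else 0)) = 0 := by
  by_cases hall : ∀ i ∈ J, Vol v (J.erase i) = 0
  · apply Finset.sum_eq_zero
    intro i hi
    have h0 := hall i hi
    rw [if_neg (by tauto), if_neg (by tauto), add_zero]
  push_neg at hall
  obtain ⟨i₀, hi₀J, hvol₀⟩ := hall
  obtain ⟨aa, haa0, habs, hrel⟩ := exists_relation v J hJcard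
  have hspan : Submodule.span ℝ (vR v '' (J : Set (Fin n))) = ⊤ := by
    have h1 := span_top_of_vol_ne_zero v (J.erase i₀)
      (by rw [Finset.card_erase_of_mem hi₀J, hJcard]; rfl) hvol₀
    rw [eq_top_iff, ← h1]
    exact Submodule.span_mono (Set.image_mono (fun t ht => Finset.mem_of_mem_erase ht))
  have hane : ∃ i ∈ J, aa i ≠ 0 :=
    ⟨i₀, hi₀J, fun h => hvol₀ (by rw [← habs i₀ hi₀J, h, abs_zero])⟩
  by_cases hcd : intVec c ∈ coneC v ∧ intVec (vSum v J - c) ∈ interior (coneC v)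
  case neg =>
    apply Finset.sum_eq_zero
    intro i hi
    have hA0 : (if (intVec (c - v i) ∈ coneC v ∧ intVec (vSum v J - c) ∈ interior (coneC v)) ∧
            Vol v (J.erase i) ≠ 0 then
          ξ (c - v i) (vSum v J - c) (J.erase i) * (Vol v (J.erase i) : ℂ) *
            (if i = k then 1 else -((mu (J.erase i) (vR v i) : ℝ) : ℂ)) *
            (∏ j ∈ J.erase k, x j) * (P c * Q (vSum v J - c))
        else 0) = 0 := by
      apply if_neg
      rintro ⟨⟨h1, h2⟩, -⟩
      apply hcd
      refine ⟨?_, h2⟩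
      have he : intVec c = intVec (c - v i) + vR v i := by
        rw [← intVec_v v i, ← intVec_add, show c - v i + v i = c from by abel]
      rw [he]
      exact coneC_add h1 (vR_mem_coneC v i)
    have hB0 : (if (intVec c ∈ coneC v ∧ intVec (vSum v J - c - v i) ∈ interior (coneC v)) ∧
            Vol v (J.erase i) ≠ 0 then
          ξ c (vSum v J - c - v i) (J.erase i) * (Vol v (J.erase i) : ℂ) *
            (if i = k then 1 else -((mu (J.erase i) (vR v i) : ℝ) : ℂ)) *
            (∏ j ∈ J.erase k, x j) * (P c * Q (vSum v J - c))
        else 0) = 0 := by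
      apply if_neg
      rintro ⟨⟨h1, h2⟩, -⟩
      apply hcd
      refine ⟨h1, ?_⟩
      have he : intVec (vSum v J - c) = intVec (vSum v J - c - v i) + vR v i := by
        rw [← intVec_v v i, ← intVec_add,
          show vSum v J - c - v i + v i = vSum v J - c from by abel]
      rw [he]
      exact interior_coneC_add h2 (vR_mem_coneC v i)
    rw [hA0, hB0, add_zero]
  have hXi := hξ J hJcard hspan aa hane hrel c (vSum v J - c) hcd.1 hcd.2 (by abel)
  have hterm : ∀ i ∈ J,
      ((if (intVec (c - v i) ∈ coneC v ∧ intVec (vSum v J - c) ∈ interior (coneC v)) ∧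
            Vol v (J.erase i) ≠ 0 then
          ξ (c - v i) (vSum v J - c) (J.erase i) * (Vol v (J.erase i) : ℂ) *
            (if i = k then 1 else -((mu (J.erase i) (vR v i) : ℝ) : ℂ)) *
            (∏ j ∈ J.erase k, x j) * (P c * Q (vSum v J - c))
        else 0) +
       (if (intVec c ∈ coneC v ∧ intVec (vSum v J - c - v i) ∈ interior (coneC v)) ∧
            Vol v (J.erase i) ≠ 0 then
          ξ c (vSum v J - c - v i) (J.erase i) * (Vol v (J.erase i) : ℂ) *
            (if i = k then 1 else -((mu (J.erase i) (vR v i) : ℝ) : ℂ)) *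
            (∏ j ∈ J.erase k, x j) * (P c * Q (vSum v J - c))
        else 0))
      = ((aa k : ℂ) * (∏ j ∈ J.erase k, x j) * (P c * Q (vSum v J - c)))
        * ((Real.sign (aa i) : ℂ) *
          ((if intVec (c - v i) ∈ coneC v then
              ξ (c - v i) (vSum v J - c) (J.erase i) else 0) +
           (if intVec (vSum v J - c - v i) ∈ interior (coneC v) then
              ξ c (vSum v J - c - v i) (J.erase i) else 0))) := by
    intro i hiJ
    by_cases hvi : Vol v (J.erase i) = 0
    · have haai : aa i = 0 := by
        have h := habs i hiJ; rw [hvi] at h; exact abs_eq_zero.mp h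
      rw [if_neg (by tauto), if_neg (by tauto), haai, Real.sign_zero]
      push_cast
      ring
    · have haai : aa i ≠ 0 := fun h => hvi (by rw [← habs i hiJ, h, abs_zero])
      have hco : (Vol v (J.erase i)) * (if i = k then (1:ℝ) else -(mu (J.erase i) (vR v i)))
          = aa k * Real.sign (aa i) := by
        by_cases hik : i = k
        · subst hik
          rw [if_pos rfl, mul_one, ← habs i hiJ, ← self_mul_sign]
        · rw [if_neg hik]
          have hkJe : k ∈ J.erase i := Finset.mem_erase.mpr ⟨fun h => hik h.symm, hkJ⟩
          have hμ := hmu (J.erase i)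
            ⟨by rw [Finset.card_erase_of_mem hiJ, hJcard]; rfl, hvi, hkJe⟩
          have happ : ∑ j ∈ J, aa j * (mu (J.erase i)) (vR v j) = 0 := by
            have h := congrArg (mu (J.erase i)) hrel
            rw [map_sum, map_zero] at h
            rw [← h]
            exact Finset.sum_congr rfl fun j _ => by rw [map_smul]; rfl
          have hsum2 : ∑ j ∈ J, aa j * (mu (J.erase i)) (vR v j)
              = aa i * (mu (J.erase i)) (vR v i) + aa k := by
            rw [← Finset.add_sum_erase J _ hiJ]
            congr 1
            have h3 : ∀ j ∈ J.erase i, aa j * (mu (J.erase i)) (vR v j)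
                = if j = k then aa j else 0 := by
              intro j hj
              rw [hμ j hj]
              by_cases h : j = k <;> simp [h]
            rw [Finset.sum_congr rfl h3, Finset.sum_ite_eq' (J.erase i) k (fun j => aa j),
              if_pos hkJe]
          have hμv : (mu (J.erase i)) (vR v i) = -(aa k) / aa i := by
            have h4 : aa i * (mu (J.erase i)) (vR v i) + aa k = 0 := by
              rw [← hsum2]; exact happ
            field_simp
            linear_combination h4
          rw [hμv, ← habs i hiJ, ← self_mul_sign]
          field_simp
      have hcoC : (Vol v (J.erase i) : ℂ) *
          (if i = k then 1 else -((mu (J.erase i) (vR v i) : ℝ) : ℂ))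
          = ((aa k : ℝ) : ℂ) * ((Real.sign (aa i) : ℝ) : ℂ) := by
        have hif : (if i = k then (1:ℂ) else -((mu (J.erase i) (vR v i) : ℝ) : ℂ))
            = (((if i = k then (1:ℝ) else -(mu (J.erase i) (vR v i))) : ℝ) : ℂ) := by
          by_cases h : i = k <;> simp [h]
        rw [hif, ← Complex.ofReal_mul, hco, Complex.ofReal_mul]
      have hA : (if (intVec (c - v i) ∈ coneC v ∧ intVec (vSum v J - c) ∈ interior (coneC v)) ∧
            Vol v (J.erase i) ≠ 0 then
          ξ (c - v i) (vSum v J - c) (J.erase i) * (Vol v (J.erase i) : ℂ) *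
            (if i = k then 1 else -((mu (J.erase i) (vR v i) : ℝ) : ℂ)) *
            (∏ j ∈ J.erase k, x j) * (P c * Q (vSum v J - c))
        else 0)
          = (if intVec (c - v i) ∈ coneC v then
              ξ (c - v i) (vSum v J - c) (J.erase i) else 0) *
            ((Vol v (J.erase i) : ℂ) *
              (if i = k then 1 else -((mu (J.erase i) (vR v i) : ℝ) : ℂ)) *
              (∏ j ∈ J.erase k, x j) * (P c * Q (vSum v J - c))) := by
        by_cases h : intVec (c - v i) ∈ coneC v
        · rw [if_pos ⟨⟨h, hcd.2⟩, hvi⟩, if_pos h]; ring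
        · rw [if_neg (by tauto), if_neg h, zero_mul]
      have hB : (if (intVec c ∈ coneC v ∧ intVec (vSum v J - c - v i) ∈ interior (coneC v)) ∧
            Vol v (J.erase i) ≠ 0 then
          ξ c (vSum v J - c - v i) (J.erase i) * (Vol v (J.erase i) : ℂ) *
            (if i = k then 1 else -((mu (J.erase i) (vR v i) : ℝ) : ℂ)) *
            (∏ j ∈ J.erase k, x j) * (P c * Q (vSum v J - c))
        else 0)
          = (if intVec (vSum v J - c - v i) ∈ interior (coneC v) then
              ξ c (vSum v J - c - v i) (J.erase i) else 0) *
            ((Vol v (J.erase i) : ℂ) *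
              (if i = k then 1 else -((mu (J.erase i) (vR v i) : ℝ) : ℂ)) *
              (∏ j ∈ J.erase k, x j) * (P c * Q (vSum v J - c))) := by
        by_cases h : intVec (vSum v J - c - v i) ∈ interior (coneC v)
        · rw [if_pos ⟨⟨hcd.1, h⟩, hvi⟩, if_pos h]; ring
        · rw [if_neg (by tauto), if_neg h, zero_mul]
      rw [hA, hB, ← add_mul]
      rw [show (if intVec (c - v i) ∈ coneC v then
              ξ (c - v i) (vSum v J - c) (J.erase i) else 0) +
            (if intVec (vSum v J - c - v i) ∈ interior (coneC v) then
              ξ c (vSum v J - c - v i) (J.erase i) else 0)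
          = ((if intVec (c - v i) ∈ coneC v then
              ξ (c - v i) (vSum v J - c) (J.erase i) else 0) +
            (if intVec (vSum v J - c - v i) ∈ interior (coneC v) then
              ξ c (vSum v J - c - v i) (J.erase i) else 0)) from rfl]
      calc _ = ((Vol v (J.erase i) : ℂ) *
          (if i = k then 1 else -((mu (J.erase i) (vR v i) : ℝ) : ℂ))) *
          (((if intVec (c - v i) ∈ coneC v then
              ξ (c - v i) (vSum v J - c) (J.erase i) else 0) +
            (if intVec (vSum v J - c - v i) ∈ interior (coneC v) then
              ξ c (vSum v J - c - v i) (J.erase i) else 0)) *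
            ((∏ j ∈ J.erase k, x j) * (P c * Q (vSum v J - c)))) := by ring
        _ = _ := by rw [hcoC]; push_cast; ring
  rw [Finset.sum_congr rfl hterm, ← Finset.mul_sum, ← hXi, mul_zero]

end AuxBracket
section AuxStepD

variable {r n : ℕ}

lemma stepD (deg : (Fin r → ℝ) →ₗ[ℝ] ℝ) (v : Fin n → Fin r → ℤ)
    (hv_deg : ∀ i, deg (vR v i) = 1)
    (ξ : (Fin r → ℤ) → (Fin r → ℤ) → Finset (Fin n) → ℂ)
    (hξ : ∀ J : Finset (Fin n), J.card = r + 1 →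
      Submodule.span ℝ (vR v '' (J : Set (Fin n))) = ⊤ →
      ∀ a : Fin n → ℝ, (∃ i ∈ J, a i ≠ 0) → (∑ i ∈ J, a i • vR v i = 0) →
      ∀ c d : Fin r → ℤ, intVec c ∈ coneC v → intVec d ∈ interior (coneC v) →
        c + d = vSum v J →
        0 = ∑ j ∈ J, (Real.sign (a j) : ℂ) *
          ((if intVec (c - v j) ∈ coneC v then ξ (c - v j) d (J.erase j) else 0) +
           (if intVec (d - v j) ∈ interior (coneC v) then ξ c (d - v j) (J.erase j) else 0)))
    (mu : Finset (Fin n) → (Fin r → ℝ) →ₗ[ℝ] ℝ) (k : Fin n)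
    (hmu : ∀ I : Finset (Fin n), (I.card = r ∧ Vol v I ≠ 0 ∧ k ∈ I) →
      ∀ i ∈ I, mu I (vR v i) = if i = k then 1 else 0)
    (x : Fin n → ℂ) (P Q : (Fin r → ℤ) → ℂ)
    (J : Finset (Fin n)) (hJcard : J.card = r + 1) :
    ∑ i : Fin n, (if i ∈ J ∧ k ∈ J then
      ∑ c ∈ bigT v, eFun v ξ mu x P Q k (J.erase i) i c else 0) = 0 := by
  by_cases hkJ : k ∈ J
  case neg =>
    apply Finset.sum_eq_zero
    intro i _
    exact if_neg (fun h => hkJ h.2)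
  have hdegJ : deg (intVec (vSum v J)) = (r : ℝ) + 1 := by
    rw [intVec_vSum, map_sum, Finset.sum_congr rfl (fun i _ => hv_deg i),
      Finset.sum_const, hJcard, nsmul_eq_mul]
    push_cast
    ring
  have h2 : ∑ i : Fin n, (if i ∈ J ∧ k ∈ J then
        ∑ c ∈ bigT v, eFun v ξ mu x P Q k (J.erase i) i c else 0)
      = ∑ i ∈ J, ∑ c ∈ bigT v, eFun v ξ mu x P Q k (J.erase i) i c := by
    have h2a : ∀ i : Fin n, (if i ∈ J ∧ k ∈ J then
        ∑ c ∈ bigT v, eFun v ξ mu x P Q k (J.erase i) i c else 0)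
        = (if i ∈ J then ∑ c ∈ bigT v, eFun v ξ mu x P Q k (J.erase i) i c else 0) := by
      intro i
      by_cases hiJ : i ∈ J <;> simp [hiJ, hkJ]
    rw [Finset.sum_congr rfl (fun i _ => h2a i)]
    rw [Finset.sum_ite_mem Finset.univ J
      (fun i => ∑ c ∈ bigT v, eFun v ξ mu x P Q k (J.erase i) i c), Finset.univ_inter]
  rw [h2]
  have h3 : ∀ i ∈ J, ∑ c ∈ bigT v, eFun v ξ mu x P Q k (J.erase i) i c
      = ∑ c ∈ bigT v,
        ((if (intVec (c - v i) ∈ coneC v ∧ intVec (vSum v J - c) ∈ interior (coneC v)) ∧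
              Vol v (J.erase i) ≠ 0 then
            ξ (c - v i) (vSum v J - c) (J.erase i) * (Vol v (J.erase i) : ℂ) *
              (if i = k then 1 else -((mu (J.erase i) (vR v i) : ℝ) : ℂ)) *
              (∏ j ∈ J.erase k, x j) * (P c * Q (vSum v J - c))
          else 0) +
         (if (intVec c ∈ coneC v ∧ intVec (vSum v J - c - v i) ∈ interior (coneC v)) ∧
              Vol v (J.erase i) ≠ 0 then
            ξ c (vSum v J - c - v i) (J.erase i) * (Vol v (J.erase i) : ℂ) *
              (if i = k then 1 else -((mu (J.erase i) (vR v i) : ℝ) : ℂ)) *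
              (∏ j ∈ J.erase k, x j) * (P c * Q (vSum v J - c))
          else 0)) := by
    intro i hiJ
    have hins : insert i (J.erase i) = J := Finset.insert_erase hiJ
    have hvs : vSum v (J.erase i) = vSum v J - v i := by
      have h := Finset.sum_erase_add J (fun j => v j) hiJ
      rw [vSum, vSum]
      exact eq_sub_of_add_eq h
    have hcanon : ∀ c : Fin r → ℤ, eFun v ξ mu x P Q k (J.erase i) i c
        = (if (intVec c ∈ coneC v ∧ intVec (vSum v J - v i - c) ∈ interior (coneC v)) ∧
              Vol v (J.erase i) ≠ 0 then
            ξ c (vSum v J - v i - c) (J.erase i) * (Vol v (J.erase i) : ℂ) *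
              (if i = k then 1 else -((mu (J.erase i) (vR v i) : ℝ) : ℂ)) *
              (∏ j ∈ J.erase k, x j) * (P (c + v i) * Q (vSum v J - v i - c))
          else 0) +
          (if (intVec c ∈ coneC v ∧ intVec (vSum v J - v i - c) ∈ interior (coneC v)) ∧
              Vol v (J.erase i) ≠ 0 then
            ξ c (vSum v J - v i - c) (J.erase i) * (Vol v (J.erase i) : ℂ) *
              (if i = k then 1 else -((mu (J.erase i) (vR v i) : ℝ) : ℂ)) *
              (∏ j ∈ J.erase k, x j) * (P c * Q (vSum v J - v i - c + v i))
          else 0) := by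
      intro c
      simp only [eFun]
      rw [hins, hvs]
      by_cases hX : (intVec c ∈ coneC v ∧
          intVec (vSum v J - v i - c) ∈ interior (coneC v)) ∧ Vol v (J.erase i) ≠ 0
      · rw [if_pos ⟨⟨Finset.notMem_erase i J, hkJ⟩, hX⟩, if_pos hX, if_pos hX]
        ring
      · rw [if_neg (by tauto), if_neg hX, if_neg hX, add_zero]
    rw [Finset.sum_congr rfl (fun c _ => hcanon c), Finset.sum_add_distrib]
    have hAshift : ∑ c ∈ bigT v,
        (if (intVec c ∈ coneC v ∧ intVec (vSum v J - v i - c) ∈ interior (coneC v)) ∧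
              Vol v (J.erase i) ≠ 0 then
            ξ c (vSum v J - v i - c) (J.erase i) * (Vol v (J.erase i) : ℂ) *
              (if i = k then 1 else -((mu (J.erase i) (vR v i) : ℝ) : ℂ)) *
              (∏ j ∈ J.erase k, x j) * (P (c + v i) * Q (vSum v J - v i - c))
          else 0)
        = ∑ c ∈ bigT v,
          (if (intVec (c - v i) ∈ coneC v ∧ intVec (vSum v J - c) ∈ interior (coneC v)) ∧
              Vol v (J.erase i) ≠ 0 then
            ξ (c - v i) (vSum v J - c) (J.erase i) * (Vol v (J.erase i) : ℂ) *
              (if i = k then 1 else -((mu (J.erase i) (vR v i) : ℝ) : ℂ)) *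
              (∏ j ∈ J.erase k, x j) * (P c * Q (vSum v J - c))
          else 0) := by
      have h4 : ∀ c : Fin r → ℤ,
          (if (intVec c ∈ coneC v ∧ intVec (vSum v J - v i - c) ∈ interior (coneC v)) ∧
              Vol v (J.erase i) ≠ 0 then
            ξ c (vSum v J - v i - c) (J.erase i) * (Vol v (J.erase i) : ℂ) *
              (if i = k then 1 else -((mu (J.erase i) (vR v i) : ℝ) : ℂ)) *
              (∏ j ∈ J.erase k, x j) * (P (c + v i) * Q (vSum v J - v i - c))
          else 0)
          = (fun c' : Fin r → ℤ =>
            (if (intVec (c' - v i) ∈ coneC v ∧ intVec (vSum v J - c') ∈ interior (coneC v)) ∧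
              Vol v (J.erase i) ≠ 0 then
            ξ (c' - v i) (vSum v J - c') (J.erase i) * (Vol v (J.erase i) : ℂ) *
              (if i = k then 1 else -((mu (J.erase i) (vR v i) : ℝ) : ℂ)) *
              (∏ j ∈ J.erase k, x j) * (P c' * Q (vSum v J - c'))
          else 0)) (c + v i) := by
        intro c
        simp only
        rw [show c + v i - v i = c from by abel,
          show vSum v J - (c + v i) = vSum v J - v i - c from by abel]
      rw [Finset.sum_congr rfl (fun c _ => h4 c)]
      have H1 : ∀ c : Fin r → ℤ,
          (if (intVec (c - v i) ∈ coneC v ∧ intVec (vSum v J - c) ∈ interior (coneC v)) ∧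
              Vol v (J.erase i) ≠ 0 then
            ξ (c - v i) (vSum v J - c) (J.erase i) * (Vol v (J.erase i) : ℂ) *
              (if i = k then 1 else -((mu (J.erase i) (vR v i) : ℝ) : ℂ)) *
              (∏ j ∈ J.erase k, x j) * (P c * Q (vSum v J - c))
          else 0) ≠ 0 → c ∈ bigT v := by
        intro c hne
        by_cases hX : (intVec (c - v i) ∈ coneC v ∧
            intVec (vSum v J - c) ∈ interior (coneC v)) ∧ Vol v (J.erase i) ≠ 0
        swap
        · exact absurd (if_neg hX) hne
        have hc1 := hX.1.1
        have hc2 := hX.1.2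
        have hcC : intVec c ∈ coneC v := by
          rw [show intVec c = intVec (c - v i) + vR v i from by
            rw [← intVec_v v i, ← intVec_add, show c - v i + v i = c from by abel]]
          exact coneC_add hc1 (vR_mem_coneC v i)
        have hdsum : deg (intVec c) + deg (intVec (vSum v J - c)) = (r : ℝ) + 1 := by
          rw [← map_add, ← intVec_add, show c + (vSum v J - c) = vSum v J from by abel]
          exact hdegJ
        have hd2 : 0 ≤ deg (intVec (vSum v J - c)) :=
          (coneC_deg deg hv_deg (interior_subset hc2)).1
        exact mem_bigT deg hv_deg hcC (by linarith)
      have H2 : ∀ c : Fin r → ℤ,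
          (if (intVec (c - v i) ∈ coneC v ∧ intVec (vSum v J - c) ∈ interior (coneC v)) ∧
              Vol v (J.erase i) ≠ 0 then
            ξ (c - v i) (vSum v J - c) (J.erase i) * (Vol v (J.erase i) : ℂ) *
              (if i = k then 1 else -((mu (J.erase i) (vR v i) : ℝ) : ℂ)) *
              (∏ j ∈ J.erase k, x j) * (P c * Q (vSum v J - c))
          else 0) ≠ 0 → c - v i ∈ bigT v := by
        intro c hne
        by_cases hX : (intVec (c - v i) ∈ coneC v ∧
            intVec (vSum v J - c) ∈ interior (coneC v)) ∧ Vol v (J.erase i) ≠ 0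
        swap
        · exact absurd (if_neg hX) hne
        have hc1 := hX.1.1
        have hc2 := hX.1.2
        have hcC : intVec c ∈ coneC v := by
          rw [show intVec c = intVec (c - v i) + vR v i from by
            rw [← intVec_v v i, ← intVec_add, show c - v i + v i = c from by abel]]
          exact coneC_add hc1 (vR_mem_coneC v i)
        have hdsum : deg (intVec c) + deg (intVec (vSum v J - c)) = (r : ℝ) + 1 := by
          rw [← map_add, ← intVec_add, show c + (vSum v J - c) = vSum v J from by abel]
          exact hdegJ
        have hd2 : 0 ≤ deg (intVec (vSum v J - c)) :=
          (coneC_deg deg hv_deg (interior_subset hc2)).1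
        have hdc : deg (intVec (c - v i)) = deg (intVec c) - 1 := by
          rw [intVec_sub, map_sub, intVec_v, hv_deg i]
        exact mem_bigT deg hv_deg hc1 (by linarith)
      exact sum_shift (bigT v) _ (v i) H1 H2
    have hBrw : ∀ c : Fin r → ℤ,
        (if (intVec c ∈ coneC v ∧ intVec (vSum v J - v i - c) ∈ interior (coneC v)) ∧
              Vol v (J.erase i) ≠ 0 then
            ξ c (vSum v J - v i - c) (J.erase i) * (Vol v (J.erase i) : ℂ) *
              (if i = k then 1 else -((mu (J.erase i) (vR v i) : ℝ) : ℂ)) *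
              (∏ j ∈ J.erase k, x j) * (P c * Q (vSum v J - v i - c + v i))
          else 0)
        = (if (intVec c ∈ coneC v ∧ intVec (vSum v J - c - v i) ∈ interior (coneC v)) ∧
              Vol v (J.erase i) ≠ 0 then
            ξ c (vSum v J - c - v i) (J.erase i) * (Vol v (J.erase i) : ℂ) *
              (if i = k then 1 else -((mu (J.erase i) (vR v i) : ℝ) : ℂ)) *
              (∏ j ∈ J.erase k, x j) * (P c * Q (vSum v J - c))
          else 0) := by
      intro c
      rw [show vSum v J - v i - c = vSum v J - c - v i from by abel,
        show vSum v J - c - v i + v i = vSum v J - c from by abel]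
    rw [hAshift, Finset.sum_congr rfl (fun c _ => hBrw c), ← Finset.sum_add_distrib]
  rw [Finset.sum_congr rfl h3, Finset.sum_comm]
  apply Finset.sum_eq_zero
  intro c _
  exact (bracket v ξ hξ mu k hmu x P Q J hJcard hkJ c).symm ▸
    (bracket v ξ hξ mu k hmu x P Q J hJcard hkJ c)

end AuxStepD
section AuxFinalKey

variable {r n : ℕ}

lemma key_lemma (deg : (Fin r → ℝ) →ₗ[ℝ] ℝ) (v : Fin n → Fin r → ℤ)
    (hv_deg : ∀ i, deg (vR v i) = 1)
    (ξ : (Fin r → ℤ) → (Fin r → ℤ) → Finset (Fin n) → ℂ)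
    (hξ : ∀ J : Finset (Fin n), J.card = r + 1 →
      Submodule.span ℝ (vR v '' (J : Set (Fin n))) = ⊤ →
      ∀ a : Fin n → ℝ, (∃ i ∈ J, a i ≠ 0) → (∑ i ∈ J, a i • vR v i = 0) →
      ∀ c d : Fin r → ℤ, intVec c ∈ coneC v → intVec d ∈ interior (coneC v) →
        c + d = vSum v J →
        0 = ∑ j ∈ J, (Real.sign (a j) : ℂ) *
          ((if intVec (c - v j) ∈ coneC v then ξ (c - v j) d (J.erase j) else 0) +
           (if intVec (d - v j) ∈ interior (coneC v) then ξ c (d - v j) (J.erase j) else 0)))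
    (x : Fin n → ℂ) (P Q : (Fin r → ℤ) → ℂ)
    (hP : ∀ c, intVec c ∈ coneC v → ∀ μ : (Fin r → ℝ) →ₗ[ℝ] ℝ,
      ∑ i, (μ (vR v i) : ℂ) * x i * P (c + v i) + (μ (intVec c) : ℂ) * P c = 0)
    (hQ : ∀ d, intVec d ∈ interior (coneC v) → ∀ μ : (Fin r → ℝ) →ₗ[ℝ] ℝ,
      ∑ i, (μ (vR v i) : ℂ) * x i * Q (d + v i) + (μ (intVec d) : ℂ) * Q d = 0)
    (k : Fin n) :
    ∑ I ∈ Finset.powersetCard r (Finset.univ : Finset (Fin n)), ∑ c ∈ bigT v,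
      (if intVec c ∈ coneC v ∧ intVec (vSum v I - c) ∈ interior (coneC v) then
        ξ c (vSum v I - c) I * (Vol v I : ℂ) *
          ((if k ∈ I then ∏ j ∈ I.erase k, x j else 0) * P c * Q (vSum v I - c) +
           (∏ i ∈ I, x i) *
             (P (c + v k) * Q (vSum v I - c) + P c * Q (vSum v I - c + v k)))
      else 0) = 0 := by
  have hmu0 : ∀ I : Finset (Fin n), ∃ μ : (Fin r → ℝ) →ₗ[ℝ] ℝ,
      (I.card = r ∧ Vol v I ≠ 0 ∧ k ∈ I) →
      ∀ i ∈ I, μ (vR v i) = if i = k then 1 else 0 := by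
    intro I
    by_cases h : I.card = r ∧ Vol v I ≠ 0 ∧ k ∈ I
    · obtain ⟨μ, hμ⟩ := exists_dualMu v I h.1 h.2.1 k h.2.2
      exact ⟨μ, fun _ => hμ⟩
    · exact ⟨0, fun h' => absurd h' h⟩
  choose mu hmu using hmu0
  calc ∑ I ∈ Finset.powersetCard r (Finset.univ : Finset (Fin n)), ∑ c ∈ bigT v,
      (if intVec c ∈ coneC v ∧ intVec (vSum v I - c) ∈ interior (coneC v) then
        ξ c (vSum v I - c) I * (Vol v I : ℂ) *
          ((if k ∈ I then ∏ j ∈ I.erase k, x j else 0) * P c * Q (vSum v I - c) +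
           (∏ i ∈ I, x i) *
             (P (c + v k) * Q (vSum v I - c) + P c * Q (vSum v I - c + v k)))
      else 0)
      = ∑ I ∈ Finset.powersetCard r (Finset.univ : Finset (Fin n)), ∑ c ∈ bigT v,
          ∑ i : Fin n, eFun v ξ mu x P Q k I i c := by
        refine Finset.sum_congr rfl fun I hI => Finset.sum_congr rfl fun c _ => ?_
        exact stepAB v ξ mu x P Q k hmu hP hQ I (Finset.mem_powersetCard.mp hI).2 c
    _ = ∑ I ∈ Finset.powersetCard r (Finset.univ : Finset (Fin n)), ∑ i : Fin n,
          ∑ c ∈ bigT v, eFun v ξ mu x P Q k I i c :=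
        Finset.sum_congr rfl fun I _ => Finset.sum_comm
    _ = ∑ J ∈ Finset.powersetCard (r + 1) (Finset.univ : Finset (Fin n)), ∑ i : Fin n,
          (if i ∈ J ∧ k ∈ J then ∑ c ∈ bigT v, eFun v ξ mu x P Q k (J.erase i) i c
           else 0) := by
        have hps : ∀ (s : Finset (Finset (Fin n))) (f : Finset (Fin n) → Fin n → ℂ),
            ∑ I ∈ s, ∑ i : Fin n, f I i
            = ∑ p ∈ s ×ˢ (Finset.univ : Finset (Fin n)), f p.1 p.2 := by
          intro s f
          rw [Finset.sum_product']
        rw [hps _ (fun I i => ∑ c ∈ bigT v, eFun v ξ mu x P Q k I i c),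
          hps _ (fun J i => if i ∈ J ∧ k ∈ J then
            ∑ c ∈ bigT v, eFun v ξ mu x P Q k (J.erase i) i c else 0)]
        have h1 : ∀ p ∈ (Finset.powersetCard r (Finset.univ : Finset (Fin n)))
            ×ˢ (Finset.univ : Finset (Fin n)),
            (∑ c ∈ bigT v, eFun v ξ mu x P Q k p.1 p.2 c) ≠ 0 →
            (p.2 ∉ p.1 ∧ k ∈ insert p.2 p.1) := by
          intro p _ hne
          by_contra hcon
          exact hne (Finset.sum_eq_zero fun c _ => by
            simp only [eFun]
            exact if_neg (by tauto))
        have h2 : ∀ q ∈ (Finset.powersetCard (r + 1) (Finset.univ : Finset (Fin n)))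
            ×ˢ (Finset.univ : Finset (Fin n)),
            (if q.2 ∈ q.1 ∧ k ∈ q.1 then
              ∑ c ∈ bigT v, eFun v ξ mu x P Q k (q.1.erase q.2) q.2 c else 0) ≠ 0 →
            (q.2 ∈ q.1 ∧ k ∈ q.1) := by
          intro q _ hne
          by_contra hcon
          exact hne (if_neg hcon)
        rw [← Finset.sum_filter_of_ne h1, ← Finset.sum_filter_of_ne h2]
        refine Finset.sum_nbij' (fun p => (insert p.2 p.1, p.2))
          (fun q => (q.1.erase q.2, q.2)) ?_ ?_ ?_ ?_ ?_
        · intro p hp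
          rw [Finset.mem_filter, Finset.mem_product] at hp ⊢
          obtain ⟨⟨hp1, -⟩, hp3, hp4⟩ := hp
          refine ⟨⟨Finset.mem_powersetCard.mpr
            ⟨Finset.subset_univ _, ?_⟩, Finset.mem_univ _⟩, Finset.mem_insert_self _ _, hp4⟩
          rw [Finset.card_insert_of_notMem hp3, (Finset.mem_powersetCard.mp hp1).2]
        · intro q hq
          rw [Finset.mem_filter, Finset.mem_product] at hq ⊢
          obtain ⟨⟨hq1, -⟩, hq3, hq4⟩ := hq
          refine ⟨⟨Finset.mem_powersetCard.mpr
            ⟨Finset.subset_univ _, ?_⟩, Finset.mem_univ _⟩, Finset.notMem_erase _ _, ?_⟩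
          · rw [Finset.card_erase_of_mem hq3, (Finset.mem_powersetCard.mp hq1).2]
            rfl
          · rw [Finset.insert_erase hq3]
            exact hq4
        · intro p hp
          rw [Finset.mem_filter] at hp
          have : (insert p.2 p.1).erase p.2 = p.1 := Finset.erase_insert hp.2.1
          simp [this]
        · intro q hq
          rw [Finset.mem_filter] at hq
          have : insert q.2 (q.1.erase q.2) = q.1 := Finset.insert_erase hq.2.1
          simp [this]
        · intro p hp
          rw [Finset.mem_filter] at hp
          rw [if_pos ⟨Finset.mem_insert_self _ _, hp.2.2⟩, Finset.erase_insert hp.2.1]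
    _ = 0 := Finset.sum_eq_zero fun J hJ =>
        stepD deg v hv_deg ξ hξ mu k hmu x P Q J (Finset.mem_powersetCard.mp hJ).2

end AuxFinalKey
section AuxTermDeriv

variable {r n : ℕ}

lemma term_deriv (v : Fin n → Fin r → ℤ)
    (ξ : (Fin r → ℤ) → (Fin r → ℤ) → Finset (Fin n) → ℂ)
    (Φ Ψ : (Fin r → ℤ) → (Fin n → ℂ) → ℂ) (U : Set (Fin n → ℂ)) (hUopen : IsOpen U)
    (hΦ : IsSol0 v (coneC v) U Φ) (hΨ : IsSol0 v (interior (coneC v)) U Ψ)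
    (z : Fin n → ℂ) (hz : z ∈ U) (I : Finset (Fin n)) (c : Fin r → ℤ) :
    DifferentiableAt ℂ (fun w : Fin n → ℂ =>
      if intVec c ∈ coneC v ∧ intVec (vSum v I - c) ∈ interior (coneC v) then
        ξ c (vSum v I - c) I * (Vol v I : ℂ) * (∏ i ∈ I, w i) * Φ c w * Ψ (vSum v I - c) w
      else 0) z ∧
    ∀ k : Fin n, fderiv ℂ (fun w : Fin n → ℂ =>
      if intVec c ∈ coneC v ∧ intVec (vSum v I - c) ∈ interior (coneC v) then
        ξ c (vSum v I - c) I * (Vol v I : ℂ) * (∏ i ∈ I, w i) * Φ c w * Ψ (vSum v I - c) w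
      else 0) z (Pi.single k 1)
      = (if intVec c ∈ coneC v ∧ intVec (vSum v I - c) ∈ interior (coneC v) then
          ξ c (vSum v I - c) I * (Vol v I : ℂ) *
            ((if k ∈ I then ∏ j ∈ I.erase k, z j else 0) * Φ c z * Ψ (vSum v I - c) z +
             (∏ i ∈ I, z i) *
               (Φ (c + v k) z * Ψ (vSum v I - c) z + Φ c z * Ψ (vSum v I - c + v k) z))
        else 0) := by
  by_cases hχ : intVec c ∈ coneC v ∧ intVec (vSum v I - c) ∈ interior (coneC v)
  case neg =>
    have hGeq : (fun w : Fin n → ℂ =>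
        if intVec c ∈ coneC v ∧ intVec (vSum v I - c) ∈ interior (coneC v) then
          ξ c (vSum v I - c) I * (Vol v I : ℂ) * (∏ i ∈ I, w i) * Φ c w * Ψ (vSum v I - c) w
        else 0) = (fun _ : Fin n → ℂ => (0 : ℂ)) := funext fun w => if_neg hχ
    rw [hGeq]
    refine ⟨differentiableAt_const 0, fun k => ?_⟩
    rw [if_neg hχ]
    simp
  case pos =>
    have hΦd : DifferentiableAt ℂ (Φ c) z :=
      (hΦ.1 c hχ.1 z hz).differentiableAt (hUopen.mem_nhds hz)
    have hΨd : DifferentiableAt ℂ (Ψ (vSum v I - c)) z :=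
      (hΨ.1 (vSum v I - c) hχ.2 z hz).differentiableAt (hUopen.mem_nhds hz)
    have hm : DifferentiableAt ℂ (fun w : Fin n → ℂ => ∏ i ∈ I, w i) z :=
      (hasFDerivAt_mon I z).differentiableAt
    have hmK : DifferentiableAt ℂ (fun w : Fin n → ℂ =>
        ξ c (vSum v I - c) I * (Vol v I : ℂ) * ∏ i ∈ I, w i) z :=
      hm.const_mul _
    have hCd : DifferentiableAt ℂ (fun w : Fin n → ℂ =>
        ξ c (vSum v I - c) I * (Vol v I : ℂ) * (∏ i ∈ I, w i) * Φ c w) z := hmK.mul hΦd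
    have hGeq : (fun w : Fin n → ℂ =>
        if intVec c ∈ coneC v ∧ intVec (vSum v I - c) ∈ interior (coneC v) then
          ξ c (vSum v I - c) I * (Vol v I : ℂ) * (∏ i ∈ I, w i) * Φ c w * Ψ (vSum v I - c) w
        else 0) = (fun w : Fin n → ℂ =>
          ξ c (vSum v I - c) I * (Vol v I : ℂ) * (∏ i ∈ I, w i) * Φ c w *
            Ψ (vSum v I - c) w) := funext fun w => if_pos hχ
    rw [hGeq]
    refine ⟨hCd.mul hΨd, fun k => ?_⟩
    have e3 : fderiv ℂ (fun w : Fin n → ℂ =>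
        ξ c (vSum v I - c) I * (Vol v I : ℂ) * (∏ i ∈ I, w i) * Φ c w *
          Ψ (vSum v I - c) w) z
        = (ξ c (vSum v I - c) I * (Vol v I : ℂ) * (∏ i ∈ I, z i) * Φ c z) •
            fderiv ℂ (Ψ (vSum v I - c)) z
          + Ψ (vSum v I - c) z • fderiv ℂ (fun w : Fin n → ℂ =>
              ξ c (vSum v I - c) I * (Vol v I : ℂ) * (∏ i ∈ I, w i) * Φ c w) z :=
      fderiv_mul hCd hΨd
    have e2 : fderiv ℂ (fun w : Fin n → ℂ =>
        ξ c (vSum v I - c) I * (Vol v I : ℂ) * (∏ i ∈ I, w i) * Φ c w) z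
        = (ξ c (vSum v I - c) I * (Vol v I : ℂ) * ∏ i ∈ I, z i) • fderiv ℂ (Φ c) z
          + Φ c z • fderiv ℂ (fun w : Fin n → ℂ =>
              ξ c (vSum v I - c) I * (Vol v I : ℂ) * ∏ i ∈ I, w i) z :=
      fderiv_mul hmK hΦd
    have e1 : fderiv ℂ (fun w : Fin n → ℂ =>
        ξ c (vSum v I - c) I * (Vol v I : ℂ) * ∏ i ∈ I, w i) z
        = (ξ c (vSum v I - c) I * (Vol v I : ℂ)) •
            fderiv ℂ (fun w : Fin n → ℂ => ∏ i ∈ I, w i) z :=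
      fderiv_const_mul hm _
    have e0 : fderiv ℂ (fun w : Fin n → ℂ => ∏ i ∈ I, w i) z
        = ∑ i ∈ I, (∏ j ∈ I.erase i, z j) • (ContinuousLinearMap.proj i :
            (Fin n → ℂ) →L[ℂ] ℂ) := (hasFDerivAt_mon I z).fderiv
    rw [e3, e2, e1, e0, if_pos hχ]
    simp only [ContinuousLinearMap.add_apply, ContinuousLinearMap.coe_smul',
      Pi.smul_apply, smul_eq_mul]
    rw [mon_deriv_apply I z k, hΦ.2.1 c hχ.1 k z hz, hΨ.2.1 (vSum v I - c) hχ.2 k z hz]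
    ring

end AuxTermDeriv
/-- sufficient condition for the pairing to be constant. -/
theorem statement1
    (r n : ℕ) (hr : 1 ≤ r) (hn : r ≤ n)
    (deg : (Fin r → ℝ) →ₗ[ℝ] ℝ)
    (hdegInt : ∀ m : Fin r → ℤ, ∃ k : ℤ, deg (intVec m) = (k : ℝ))
    (v : Fin n → Fin r → ℤ)
    (hv_inj : Function.Injective v)
    (hv_span : Submodule.span ℝ (Set.range (vR v)) = ⊤)
    (hv_deg : ∀ i, deg (vR v i) = 1)
    (ξ : (Fin r → ℤ) → (Fin r → ℤ) → Finset (Fin n) → ℂ)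
    (hξ : ∀ J : Finset (Fin n), J.card = r + 1 →
      Submodule.span ℝ (vR v '' (J : Set (Fin n))) = ⊤ →
      ∀ a : Fin n → ℝ, (∃ i ∈ J, a i ≠ 0) → (∑ i ∈ J, a i • vR v i = 0) →
      ∀ c d : Fin r → ℤ, intVec c ∈ coneC v → intVec d ∈ interior (coneC v) →
        c + d = vSum v J →
        0 = ∑ j ∈ J, (Real.sign (a j) : ℂ) *
          ((if intVec (c - v j) ∈ coneC v then ξ (c - v j) d (J.erase j) else 0) +
           (if intVec (d - v j) ∈ interior (coneC v) then ξ c (d - v j) (J.erase j) else 0)))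
    (U : Set (Fin n → ℂ)) (hUopen : IsOpen U) (hUconn : IsConnected U)
    (hU0 : ∀ x ∈ U, ∀ i, x i ≠ 0)
    (Φ Ψ : (Fin r → ℤ) → (Fin n → ℂ) → ℂ)
    (hΦ : IsSol0 v (coneC v) U Φ)
    (hΨ : IsSol0 v (interior (coneC v)) U Ψ) :
    ∀ x ∈ U, ∀ y ∈ U, pairingXi v ξ Φ Ψ x = pairingXi v ξ Φ Ψ y := by
  have hrep : ∀ z : Fin n → ℂ, pairingXi v ξ Φ Ψ z
      = ∑ I ∈ Finset.powersetCard r (Finset.univ : Finset (Fin n)), ∑ c ∈ bigT v,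
        (if intVec c ∈ coneC v ∧ intVec (vSum v I - c) ∈ interior (coneC v) then
          ξ c (vSum v I - c) I * (Vol v I : ℂ) * (∏ i ∈ I, z i) * Φ c z *
            Ψ (vSum v I - c) z
        else 0) := by
    intro z
    unfold pairingXi
    refine Finset.sum_congr rfl fun I hI => ?_
    apply finsum_eq_sum_of_support_subset
    intro c hc
    rw [Function.mem_support] at hc
    have hχ : intVec c ∈ coneC v ∧ intVec (vSum v I - c) ∈ interior (coneC v) := by
      by_contra h
      exact hc (if_neg h)
    have hcard : I.card = r := (Finset.mem_powersetCard.mp hI).2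
    have hdegI : deg (intVec (vSum v I)) = (r : ℝ) := by
      rw [intVec_vSum, map_sum, Finset.sum_congr rfl (fun i _ => hv_deg i),
        Finset.sum_const, hcard, nsmul_eq_mul, mul_one]
    have hdsum : deg (intVec c) + deg (intVec (vSum v I - c)) = (r : ℝ) := by
      rw [← map_add, ← intVec_add, show c + (vSum v I - c) = vSum v I from by abel, hdegI]
    have hd2 : 0 ≤ deg (intVec (vSum v I - c)) :=
      (coneC_deg deg hv_deg (interior_subset hχ.2)).1
    exact Finset.mem_coe.mpr (mem_bigT deg hv_deg hχ.1 (by linarith))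
  have hfun : pairingXi v ξ Φ Ψ
      = fun z => ∑ I ∈ Finset.powersetCard r (Finset.univ : Finset (Fin n)), ∑ c ∈ bigT v,
        (if intVec c ∈ coneC v ∧ intVec (vSum v I - c) ∈ interior (coneC v) then
          ξ c (vSum v I - c) I * (Vol v I : ℂ) * (∏ i ∈ I, z i) * Φ c z *
            Ψ (vSum v I - c) z
        else 0) := funext hrep
  have hFd : ∀ z ∈ U, DifferentiableAt ℂ (pairingXi v ξ Φ Ψ) z := by
    intro z hz
    rw [hfun]
    exact DifferentiableAt.fun_sum fun I _ => DifferentiableAt.fun_sum fun c _ =>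
      (term_deriv v ξ Φ Ψ U hUopen hΦ hΨ z hz I c).1
  have hfz : ∀ z ∈ U, fderiv ℂ (pairingXi v ξ Φ Ψ) z = 0 := by
    intro z hz
    have hP : ∀ c, intVec c ∈ coneC v → ∀ μ : (Fin r → ℝ) →ₗ[ℝ] ℝ,
        ∑ i, (μ (vR v i) : ℂ) * z i * Φ (c + v i) z + (μ (intVec c) : ℂ) * Φ c z = 0 := by
      intro c hcC μ
      have e : ∑ i : Fin n, (μ (vR v i) : ℂ) * z i * Φ (c + v i) z
          = ∑ i : Fin n, (μ (vR v i) : ℂ) * z i * fderiv ℂ (Φ c) z (Pi.single i 1) :=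
        Finset.sum_congr rfl fun i _ => by rw [hΦ.2.1 c hcC i z hz]
      rw [e]
      exact hΦ.2.2 c hcC μ z hz
    have hQ : ∀ d, intVec d ∈ interior (coneC v) → ∀ μ : (Fin r → ℝ) →ₗ[ℝ] ℝ,
        ∑ i, (μ (vR v i) : ℂ) * z i * Ψ (d + v i) z + (μ (intVec d) : ℂ) * Ψ d z = 0 := by
      intro d hdC μ
      have e : ∑ i : Fin n, (μ (vR v i) : ℂ) * z i * Ψ (d + v i) z
          = ∑ i : Fin n, (μ (vR v i) : ℂ) * z i * fderiv ℂ (Ψ d) z (Pi.single i 1) :=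
        Finset.sum_congr rfl fun i _ => by rw [hΨ.2.1 d hdC i z hz]
      rw [e]
      exact hΨ.2.2 d hdC μ z hz
    have hsingle : ∀ k : Fin n,
        fderiv ℂ (pairingXi v ξ Φ Ψ) z (Pi.single k 1) = 0 := by
      intro k
      have hIdiff : ∀ I ∈ Finset.powersetCard r (Finset.univ : Finset (Fin n)),
          DifferentiableAt ℂ (fun w : Fin n → ℂ => ∑ c ∈ bigT v,
            (if intVec c ∈ coneC v ∧ intVec (vSum v I - c) ∈ interior (coneC v) then
              ξ c (vSum v I - c) I * (Vol v I : ℂ) * (∏ i ∈ I, w i) * Φ c w *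
                Ψ (vSum v I - c) w
            else 0)) z :=
        fun I _ => DifferentiableAt.fun_sum fun c _ =>
          (term_deriv v ξ Φ Ψ U hUopen hΦ hΨ z hz I c).1
      have hsum1 : fderiv ℂ (fun w : Fin n → ℂ =>
          ∑ I ∈ Finset.powersetCard r (Finset.univ : Finset (Fin n)), ∑ c ∈ bigT v,
            (if intVec c ∈ coneC v ∧ intVec (vSum v I - c) ∈ interior (coneC v) then
              ξ c (vSum v I - c) I * (Vol v I : ℂ) * (∏ i ∈ I, w i) * Φ c w *
                Ψ (vSum v I - c) w
            else 0)) z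
          = ∑ I ∈ Finset.powersetCard r (Finset.univ : Finset (Fin n)),
              fderiv ℂ (fun w : Fin n → ℂ => ∑ c ∈ bigT v,
                (if intVec c ∈ coneC v ∧ intVec (vSum v I - c) ∈ interior (coneC v) then
                  ξ c (vSum v I - c) I * (Vol v I : ℂ) * (∏ i ∈ I, w i) * Φ c w *
                    Ψ (vSum v I - c) w
                else 0)) z := fderiv_fun_sum hIdiff
      have h2 : ∀ I ∈ Finset.powersetCard r (Finset.univ : Finset (Fin n)),
          fderiv ℂ (fun w : Fin n → ℂ => ∑ c ∈ bigT v,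
            (if intVec c ∈ coneC v ∧ intVec (vSum v I - c) ∈ interior (coneC v) then
              ξ c (vSum v I - c) I * (Vol v I : ℂ) * (∏ i ∈ I, w i) * Φ c w *
                Ψ (vSum v I - c) w
            else 0)) z (Pi.single k 1)
          = ∑ c ∈ bigT v,
            (if intVec c ∈ coneC v ∧ intVec (vSum v I - c) ∈ interior (coneC v) then
              ξ c (vSum v I - c) I * (Vol v I : ℂ) *
                ((if k ∈ I then ∏ j ∈ I.erase k, z j else 0) * Φ c z *
                    Ψ (vSum v I - c) z +
                 (∏ i ∈ I, z i) *
                   (Φ (c + v k) z * Ψ (vSum v I - c) z + Φ c z *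
                      Ψ (vSum v I - c + v k) z))
            else 0) := by
        intro I _
        have hcdiff : ∀ c ∈ bigT v, DifferentiableAt ℂ (fun w : Fin n → ℂ =>
            (if intVec c ∈ coneC v ∧ intVec (vSum v I - c) ∈ interior (coneC v) then
              ξ c (vSum v I - c) I * (Vol v I : ℂ) * (∏ i ∈ I, w i) * Φ c w *
                Ψ (vSum v I - c) w
            else 0)) z :=
          fun c _ => (term_deriv v ξ Φ Ψ U hUopen hΦ hΨ z hz I c).1
        have hsum2 : fderiv ℂ (fun w : Fin n → ℂ => ∑ c ∈ bigT v,
            (if intVec c ∈ coneC v ∧ intVec (vSum v I - c) ∈ interior (coneC v) then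
              ξ c (vSum v I - c) I * (Vol v I : ℂ) * (∏ i ∈ I, w i) * Φ c w *
                Ψ (vSum v I - c) w
            else 0)) z
            = ∑ c ∈ bigT v, fderiv ℂ (fun w : Fin n → ℂ =>
              (if intVec c ∈ coneC v ∧ intVec (vSum v I - c) ∈ interior (coneC v) then
                ξ c (vSum v I - c) I * (Vol v I : ℂ) * (∏ i ∈ I, w i) * Φ c w *
                  Ψ (vSum v I - c) w
              else 0)) z := fderiv_fun_sum hcdiff
        rw [hsum2, ContinuousLinearMap.sum_apply]
        exact Finset.sum_congr rfl fun c _ =>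
          (term_deriv v ξ Φ Ψ U hUopen hΦ hΨ z hz I c).2 k
      rw [hfun, hsum1, ContinuousLinearMap.sum_apply, Finset.sum_congr rfl h2]
      exact key_lemma deg v hv_deg ξ hξ z (fun c => Φ c z) (fun d => Ψ d z) hP hQ k
    apply ContinuousLinearMap.ext
    intro w
    have hw : w = ∑ i : Fin n, w i • (Pi.single i (1:ℂ) : Fin n → ℂ) := by
      funext j
      rw [Finset.sum_apply]
      simp [Pi.single_apply, mul_ite, Finset.sum_ite_eq]
    rw [hw, map_sum]
    simp only [map_smul, hsingle, smul_zero]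
    simp
  have hloc : ∀ z ∈ U, ∀ᶠ w in nhds z,
      pairingXi v ξ Φ Ψ w = pairingXi v ξ Φ Ψ z := by
    intro z hz
    obtain ⟨ε, hε, hball⟩ := Metric.isOpen_iff.mp hUopen z hz
    have hdo : DifferentiableOn ℂ (pairingXi v ξ Φ Ψ) (Metric.ball z ε) := fun w hw =>
      (hFd w (hball hw)).differentiableWithinAt
    have hcz : ∀ w ∈ Metric.ball z ε,
        fderivWithin ℂ (pairingXi v ξ Φ Ψ) (Metric.ball z ε) w = 0 := by
      intro w hw
      rw [fderivWithin_of_isOpen Metric.isOpen_ball hw]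
      exact hfz w (hball hw)
    filter_upwards [Metric.ball_mem_nhds z hε] with w hw
    exact (convex_ball z ε).is_const_of_fderivWithin_eq_zero hdo hcz hw
      (Metric.mem_ball_self hε)
  exact const_of_locally_const hUopen hUconn.isPreconnected hloc

end BBGKZ
end
end
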